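/- arXiv:1507.07535 — 14 statements merged into one kernel-verified Lean document; each statement's English description precedes it below -/
import Mathlib

section
/- For all x₁, x₂ ∈ ℝ, the joint cumulative distribution function of (X₁, X₂) satisfies ℙ({ω : X₁(ω) ≤ x₁ and X₂(ω) ≤ x₂}) = G(x₁)^{α₁} · G(x₂)^{α₂} · G(min(x₁, x₂))^{α₃}. -/
open MeasureTheory ProbabilityTheory Real

/-- The joint cdf of `(X₁, X₂)` with `X₁ = max (U 0) (U 2)`,
`X₂ = max (U 1) (U 2)` satisfies
`P(X₁ ≤ x₁, X₂ ≤ x₂) = G(x₁)^α₁ · G(x₂)^α₂ · G(min x₁ x₂)^α₃`. -/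
theorem beew_joint_cdf
    {Ω : Type*} [MeasurableSpace Ω] (P : Measure Ω) [IsProbabilityMeasure P]
    (lam : ℝ) (hlam : 0 < lam)
    (α : Fin 3 → ℝ) (hα : ∀ i, 0 < α i)
    (H : ℝ → ℝ) (hH : ∀ x, 0 ≤ H x)
    (U : Fin 3 → Ω → ℝ) (hUmeas : ∀ i, Measurable (U i))
    (hindep : iIndepFun U P)
    (hcdf : ∀ i x, P {ω | U i ω ≤ x} =
      ENNReal.ofReal ((1 - Real.exp (-lam * H x)) ^ (α i)))
    (x₁ x₂ : ℝ) :
    P {ω | max (U 0 ω) (U 2 ω) ≤ x₁ ∧ max (U 1 ω) (U 2 ω) ≤ x₂} =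
      ENNReal.ofReal ((1 - Real.exp (-lam * H x₁)) ^ α 0 *
        (1 - Real.exp (-lam * H x₂)) ^ α 1 *
        (1 - Real.exp (-lam * H (min x₁ x₂))) ^ α 2) := by
  have hg : ∀ x : ℝ, 0 ≤ (1 - Real.exp (-lam * H x)) := by
    intro x
    have : Real.exp (-lam * H x) ≤ 1 := by
      rw [Real.exp_le_one_iff]
      nlinarith [hH x]
    linarith
  have hgp : ∀ x i, 0 ≤ (1 - Real.exp (-lam * H x)) ^ α i := fun x i =>
    Real.rpow_nonneg (hg x) _
  set c : Fin 3 → ℝ := ![x₁, x₂, min x₁ x₂] with hc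
  have hset : {ω | max (U 0 ω) (U 2 ω) ≤ x₁ ∧ max (U 1 ω) (U 2 ω) ≤ x₂} =
      ⋂ i, U i ⁻¹' Set.Iic (c i) := by
    ext ω
    simp only [Set.mem_setOf_eq, Set.mem_iInter, Set.mem_preimage, Set.mem_Iic, max_le_iff]
    constructor
    · rintro ⟨⟨h0, h2a⟩, h1, h2b⟩ i
      fin_cases i <;> simp [hc, le_min_iff, h0, h2a, h1, h2b]
    · intro h
      have h0 := h 0; have h1 := h 1; have h2 := h 2
      simp only [hc, Matrix.cons_val_zero, Matrix.cons_val_one, Matrix.head_cons,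
        Matrix.cons_val_two, Matrix.tail_cons, le_min_iff] at h0 h1 h2
      exact ⟨⟨h0, h2.1⟩, h1, h2.2⟩
  rw [hset, hindep.meas_iInter (fun i => ⟨Set.Iic (c i), measurableSet_Iic, rfl⟩)]
  have key : ∀ i, P (U i ⁻¹' Set.Iic (c i)) =
      ENNReal.ofReal ((1 - Real.exp (-lam * H (c i))) ^ α i) := fun i => hcdf i (c i)
  simp only [key]
  rw [Fin.prod_univ_three]
  rw [← ENNReal.ofReal_mul (hgp _ _), ← ENNReal.ofReal_mul (mul_nonneg (hgp _ _) (hgp _ _))]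
  simp [hc]
end

section
/- Assume moreover that H is monotone increasing. Then for all x₁ ≤ x₂, ℙ({ω : X₁(ω) ≤ x₁ and X₂(ω) ≤ x₂}) = G(x₁)^{α₁+α₃} · G(x₂)^{α₂}, and for all x₂ ≤ x₁, ℙ({ω : X₁(ω) ≤ x₁ and X₂(ω) ≤ x₂}) = G(x₁)^{α₁} · G(x₂)^{α₂+α₃}. -/
open MeasureTheory ProbabilityTheory Real

/-- With `H` monotone increasing, for `x₁ ≤ x₂` the joint cdf is
`G(x₁)^(α₁+α₃) · G(x₂)^α₂`, and for `x₂ ≤ x₁` it is `G(x₁)^α₁ · G(x₂)^(α₂+α₃)`. -/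
theorem beew_joint_cdf_cases
    {Ω : Type*} [MeasurableSpace Ω] (P : Measure Ω) [IsProbabilityMeasure P]
    (lam : ℝ) (hlam : 0 < lam)
    (α : Fin 3 → ℝ) (hα : ∀ i, 0 < α i)
    (H : ℝ → ℝ) (hH : ∀ x, 0 ≤ H x) (hHmono : Monotone H)
    (U : Fin 3 → Ω → ℝ) (hUmeas : ∀ i, Measurable (U i))
    (hindep : iIndepFun U P)
    (hcdf : ∀ i x, P {ω | U i ω ≤ x} =
      ENNReal.ofReal ((1 - Real.exp (-lam * H x)) ^ (α i))) :
    (∀ x₁ x₂ : ℝ, x₁ ≤ x₂ →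
      P {ω | max (U 0 ω) (U 2 ω) ≤ x₁ ∧ max (U 1 ω) (U 2 ω) ≤ x₂} =
        ENNReal.ofReal ((1 - Real.exp (-lam * H x₁)) ^ (α 0 + α 2) *
          (1 - Real.exp (-lam * H x₂)) ^ α 1)) ∧
    (∀ x₁ x₂ : ℝ, x₂ ≤ x₁ →
      P {ω | max (U 0 ω) (U 2 ω) ≤ x₁ ∧ max (U 1 ω) (U 2 ω) ≤ x₂} =
        ENNReal.ofReal ((1 - Real.exp (-lam * H x₁)) ^ α 0 *
          (1 - Real.exp (-lam * H x₂)) ^ (α 1 + α 2))) := by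
  have hG : ∀ x : ℝ, 0 ≤ 1 - Real.exp (-lam * H x) := by
    intro x
    have : Real.exp (-lam * H x) ≤ 1 := by
      rw [Real.exp_le_one_iff]
      have := mul_nonneg hlam.le (hH x)
      linarith
    linarith
  set G : ℝ → ℝ := fun x => 1 - Real.exp (-lam * H x) with hGdef
  -- key: joint probability via independence
  have key : ∀ x₁ x₂ : ℝ,
      P {ω | max (U 0 ω) (U 2 ω) ≤ x₁ ∧ max (U 1 ω) (U 2 ω) ≤ x₂} =
        ENNReal.ofReal (G x₁ ^ α 0) * ENNReal.ofReal (G x₂ ^ α 1) *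
          ENNReal.ofReal (G (min x₁ x₂) ^ α 2) := by
    intro x₁ x₂
    set t : Fin 3 → ℝ := ![x₁, x₂, min x₁ x₂] with ht
    have hset : {ω | max (U 0 ω) (U 2 ω) ≤ x₁ ∧ max (U 1 ω) (U 2 ω) ≤ x₂} =
        ⋂ i, (U i) ⁻¹' (Set.Iic (t i)) := by
      ext ω
      simp only [Set.mem_setOf_eq, Set.mem_iInter, Set.mem_preimage, Set.mem_Iic,
        max_le_iff, Fin.forall_fin_succ, ht]
      constructor
      · rintro ⟨⟨h0, h2a⟩, h1, h2b⟩
        refine ⟨h0, h1, ?_, fun i => i.elim0⟩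
        simpa using le_min h2a h2b
      · rintro ⟨h0, h1, h2, -⟩
        simp only [Matrix.cons_val_succ, Matrix.cons_val_zero, le_min_iff] at h2
        exact ⟨⟨h0, h2.1⟩, h1, h2.2⟩
    rw [hset, hindep.meas_iInter (fun i => ⟨Set.Iic (t i), measurableSet_Iic, rfl⟩)]
    have hpre : ∀ i, (U i) ⁻¹' (Set.Iic (t i)) = {ω | U i ω ≤ t i} := fun i => rfl
    rw [Fin.prod_univ_three]
    simp only [hpre, hcdf]
    rfl
  have hsplit : ∀ (x : ℝ) (a b : Fin 3), 0 < α a → 0 < α b →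
      G x ^ (α a + α b) = G x ^ α a * G x ^ α b := by
    intro x a b ha hb
    exact Real.rpow_add' (hG x) (by positivity)
  constructor
  · intro x₁ x₂ h
    rw [key, min_eq_left h, hsplit x₁ 0 2 (hα 0) (hα 2)]
    rw [← ENNReal.ofReal_mul (Real.rpow_nonneg (hG _) _),
      ← ENNReal.ofReal_mul (mul_nonneg (Real.rpow_nonneg (hG _) _) (Real.rpow_nonneg (hG _) _))]
    simp only [hGdef]
    ring_nf
  · intro x₁ x₂ h
    rw [key, min_eq_right h, hsplit x₂ 1 2 (hα 1) (hα 2)]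
    rw [← ENNReal.ofReal_mul (Real.rpow_nonneg (hG _) _),
      ← ENNReal.ofReal_mul (mul_nonneg (Real.rpow_nonneg (hG _) _) (Real.rpow_nonneg (hG _) _))]
    simp only [hGdef]
    ring_nf
end

section
/- For every t ∈ ℝ, the random variable T = min(X₁, X₂) satisfies ℙ(T ≤ t) = G(t)^{α₁+α₃} + G(t)^{α₂+α₃} − G(t)^{α₁+α₂+α₃}. -/
open MeasureTheory ProbabilityTheory Real

/-- The cdf of `T = min (X₁, X₂)` is
`G(t)^(α₁+α₃) + G(t)^(α₂+α₃) − G(t)^(α₁+α₂+α₃)`. -/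
theorem beew_min_cdf
    {Ω : Type*} [MeasurableSpace Ω] (P : Measure Ω) [IsProbabilityMeasure P]
    (lam : ℝ) (hlam : 0 < lam)
    (α : Fin 3 → ℝ) (hα : ∀ i, 0 < α i)
    (H : ℝ → ℝ) (hH : ∀ x, 0 ≤ H x)
    (U : Fin 3 → Ω → ℝ) (hUmeas : ∀ i, Measurable (U i))
    (hindep : iIndepFun U P)
    (hcdf : ∀ i x, P {ω | U i ω ≤ x} =
      ENNReal.ofReal ((1 - Real.exp (-lam * H x)) ^ (α i)))
    (t : ℝ) :
    P {ω | min (max (U 0 ω) (U 2 ω)) (max (U 1 ω) (U 2 ω)) ≤ t} =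
      ENNReal.ofReal ((1 - Real.exp (-lam * H t)) ^ (α 0 + α 2) +
        (1 - Real.exp (-lam * H t)) ^ (α 1 + α 2) -
        (1 - Real.exp (-lam * H t)) ^ (α 0 + α 1 + α 2)) := by
  set G := 1 - Real.exp (-lam * H t) with hGdef
  have h1 : Real.exp (-lam * H t) ≤ 1 := by
    rw [Real.exp_le_one_iff]
    nlinarith [hH t]
  have hG0 : 0 ≤ G := by rw [hGdef]; linarith
  have hG1 : G ≤ 1 := by
    rw [hGdef]; linarith [Real.exp_pos (-lam * H t)]
  set A : Fin 3 → Set Ω := fun i => {ω | U i ω ≤ t} with hA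
  have hAmeas : ∀ i, MeasurableSet (A i) :=
    fun i => measurableSet_le (hUmeas i) measurable_const
  have key : ∀ s : Finset (Fin 3), P (⋂ i ∈ s, A i) = ∏ i ∈ s, P (A i) :=
    fun s => hindep.meas_biInter (fun i _ => ⟨Set.Iic t, measurableSet_Iic, rfl⟩)
  have hPA : ∀ i, P (A i) = ENNReal.ofReal (G ^ α i) := fun i => hcdf i t
  -- rpow facts
  have hr : ∀ a b : ℝ, 0 ≤ a → 0 ≤ b → G ^ (a + b) = G ^ a * G ^ b :=
    fun a b ha hb => Real.rpow_add_of_nonneg hG0 ha hb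
  have h02 : P (A 0 ∩ A 2) = ENNReal.ofReal (G ^ (α 0 + α 2)) := by
    have := key {0, 2}
    simp [Finset.prod_insert, hPA] at this
    rw [this, hr _ _ (hα 0).le (hα 2).le,
      ENNReal.ofReal_mul (Real.rpow_nonneg hG0 _)]
  have h12 : P (A 1 ∩ A 2) = ENNReal.ofReal (G ^ (α 1 + α 2)) := by
    have := key {1, 2}
    simp [Finset.prod_insert, hPA] at this
    rw [this, hr _ _ (hα 1).le (hα 2).le,
      ENNReal.ofReal_mul (Real.rpow_nonneg hG0 _)]
  have h012 : P (A 0 ∩ A 1 ∩ A 2) = ENNReal.ofReal (G ^ (α 0 + α 1 + α 2)) := by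
    have := key {0, 1, 2}
    simp [Finset.prod_insert, hPA, Set.inter_assoc] at this
    rw [Set.inter_assoc, this, hr _ _ (add_nonneg (hα 0).le (hα 1).le) (hα 2).le,
      hr _ _ (hα 0).le (hα 1).le,
      ENNReal.ofReal_mul (mul_nonneg (Real.rpow_nonneg hG0 _) (Real.rpow_nonneg hG0 _)),
      ENNReal.ofReal_mul (Real.rpow_nonneg hG0 _), mul_assoc]
  have hset : {ω | min (max (U 0 ω) (U 2 ω)) (max (U 1 ω) (U 2 ω)) ≤ t} =
      (A 0 ∩ A 2) ∪ (A 1 ∩ A 2) := by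
    ext ω
    simp only [Set.mem_setOf_eq, Set.mem_union, Set.mem_inter_iff, hA,
      min_le_iff, max_le_iff]
  -- inclusion exclusion
  have hinter : (A 0 ∩ A 2) ∩ (A 1 ∩ A 2) = A 0 ∩ A 1 ∩ A 2 := by
    ext ω; simp only [Set.mem_inter_iff]; tauto
  have hie := measure_union_add_inter (μ := P) (A 0 ∩ A 2)
    ((hAmeas 1).inter (hAmeas 2))
  rw [hinter, h02, h12, h012] at hie
  -- now solve in ENNReal
  have hle : G ^ (α 0 + α 1 + α 2) ≤ G ^ (α 0 + α 2) := by
    rw [show α 0 + α 1 + α 2 = (α 0 + α 2) + α 1 by ring,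
      hr _ _ (add_nonneg (hα 0).le (hα 2).le) (hα 1).le]
    nlinarith [Real.rpow_nonneg hG0 (α 0 + α 2), Real.rpow_le_one hG0 hG1 (hα 1).le,
      Real.rpow_nonneg hG0 (α 1)]
  have hnn : (0:ℝ) ≤ G ^ (α 0 + α 2) + G ^ (α 1 + α 2) - G ^ (α 0 + α 1 + α 2) := by
    nlinarith [Real.rpow_nonneg hG0 (α 1 + α 2)]
  have : P ((A 0 ∩ A 2) ∪ (A 1 ∩ A 2)) + ENNReal.ofReal (G ^ (α 0 + α 1 + α 2)) =
      ENNReal.ofReal (G ^ (α 0 + α 2) + G ^ (α 1 + α 2) - G ^ (α 0 + α 1 + α 2)) +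
      ENNReal.ofReal (G ^ (α 0 + α 1 + α 2)) := by
    rw [hie, ← ENNReal.ofReal_add hnn (Real.rpow_nonneg hG0 _),
      ← ENNReal.ofReal_add (Real.rpow_nonneg hG0 _) (Real.rpow_nonneg hG0 _)]
    ring_nf
  rw [hset]
  exact (ENNReal.add_left_inj ENNReal.ofReal_ne_top).mp this
end

section
/- Fix 0 < x₁ < x₂ and reals h₁, h₂. Assume H is monotone increasing, H(x₁) > 0, H(x₂) > 0, H has derivative h₁ at x₁ and derivative h₂ at x₂ (in the sense of HasDerivAt). Then the mixed second partial derivative of F on the region below the diagonal, namely deriv (fun y₂ => deriv (fun y₁ => F(y₁, y₂)) x₁) x₂, equals (α₁+α₃)·α₂·λ²·h₁·h₂·G(x₁)^{α₁+α₃−1}·G(x₂)^{α₂−1}·exp(−λ·H(x₁) − λ·H(x₂)). -/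
open Real

private lemma beew_G_hasDerivAt (lam : ℝ) (H : ℝ → ℝ) {x h : ℝ}
    (hd : HasDerivAt H h x) :
    HasDerivAt (fun y => 1 - Real.exp (-lam * H y))
      (lam * h * Real.exp (-lam * H x)) x := by
  have h1 : HasDerivAt (fun y => Real.exp (-lam * H y))
      (Real.exp (-lam * H x) * (-lam * h)) x := (hd.const_mul (-lam)).exp
  have h2 := h1.const_sub 1
  refine h2.congr_deriv ?_
  ring

private lemma beew_G_pos (lam : ℝ) (hlam : 0 < lam) {t : ℝ} (ht : 0 < t) :
    0 < 1 - Real.exp (-lam * t) := by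
  have : Real.exp (-lam * t) < 1 := by
    rw [Real.exp_lt_one_iff]
    nlinarith
  linarith

/-- Below the diagonal (`0 < x₁ < x₂`), the mixed second partial
derivative of the BEEW joint cdf equals
`(α₁+α₃)·α₂·λ²·h₁·h₂·G(x₁)^(α₁+α₃−1)·G(x₂)^(α₂−1)·exp(−λH(x₁)−λH(x₂))`. -/
theorem beew_density_below_diagonal
    (lam α₁ α₂ α₃ : ℝ) (hlam : 0 < lam)
    (hα₁ : 0 < α₁) (hα₂ : 0 < α₂) (hα₃ : 0 < α₃)
    (H : ℝ → ℝ) (hH : ∀ x, 0 ≤ H x) (hHmono : Monotone H)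
    (x₁ x₂ h₁ h₂ : ℝ) (hx₁ : 0 < x₁) (hx₁₂ : x₁ < x₂)
    (hH₁ : 0 < H x₁) (hH₂ : 0 < H x₂)
    (hd₁ : HasDerivAt H h₁ x₁) (hd₂ : HasDerivAt H h₂ x₂) :
    deriv (fun y₂ => deriv (fun y₁ =>
        (1 - Real.exp (-lam * H y₁)) ^ α₁ * (1 - Real.exp (-lam * H y₂)) ^ α₂ *
          (1 - Real.exp (-lam * H (min y₁ y₂))) ^ α₃) x₁) x₂ =
      (α₁ + α₃) * α₂ * lam ^ (2 : ℕ) * h₁ * h₂ *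
        (1 - Real.exp (-lam * H x₁)) ^ (α₁ + α₃ - 1) *
        (1 - Real.exp (-lam * H x₂)) ^ (α₂ - 1) *
        Real.exp (-lam * H x₁ - lam * H x₂) := by
  set G : ℝ → ℝ := fun y => 1 - Real.exp (-lam * H y) with hGdef
  have hG₁pos : 0 < G x₁ := beew_G_pos lam hlam hH₁
  have hG₂pos : 0 < G x₂ := beew_G_pos lam hlam hH₂
  have hGd₁ : HasDerivAt G (lam * h₁ * Real.exp (-lam * H x₁)) x₁ :=
    beew_G_hasDerivAt lam H hd₁
  have hGd₂ : HasDerivAt G (lam * h₂ * Real.exp (-lam * H x₂)) x₂ :=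
    beew_G_hasDerivAt lam H hd₂
  -- G is eventually positive near x₁
  have hGpos_ev : ∀ᶠ y in nhds x₁, 0 < G y :=
    hGd₁.continuousAt.eventually_ne hG₁pos.ne' |>.mono (by
      intro y hy
      exact lt_of_le_of_ne (by
        have : Real.exp (-lam * H y) ≤ 1 := by
          rw [Real.exp_le_one_iff]
          have := hH y
          nlinarith
        simp only [hGdef]; linarith) (Ne.symm hy))
  set C : ℝ := (α₁ + α₃) * G x₁ ^ (α₁ + α₃ - 1) * (lam * h₁ * Real.exp (-lam * H x₁))
    with hCdef
  -- Step 1: the inner derivative equals C * G y₂ ^ α₂ for y₂ > x₁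
  have hinner : ∀ y₂, x₁ < y₂ →
      deriv (fun y₁ => G y₁ ^ α₁ * G y₂ ^ α₂ * G (min y₁ y₂) ^ α₃) x₁
        = C * G y₂ ^ α₂ := by
    intro y₂ hy₂
    have hev : (fun y₁ => G y₁ ^ α₁ * G y₂ ^ α₂ * G (min y₁ y₂) ^ α₃)
        =ᶠ[nhds x₁] (fun y₁ => G y₁ ^ (α₁ + α₃) * G y₂ ^ α₂) := by
      filter_upwards [Iio_mem_nhds hy₂, hGpos_ev] with y₁ h1 h2
      rw [min_eq_left (le_of_lt h1), Real.rpow_add h2]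
      ring
    have hD : HasDerivAt (fun y₁ => G y₁ ^ (α₁ + α₃) * G y₂ ^ α₂)
        (C * G y₂ ^ α₂) x₁ := by
      have := (hGd₁.rpow_const (p := α₁ + α₃) (Or.inl hG₁pos.ne')).mul_const (G y₂ ^ α₂)
      refine this.congr_deriv ?_
      rw [hCdef]; ring
    rw [hev.deriv_eq, hD.deriv]
  -- Step 2: the outer derivative
  have houter : (fun y₂ => deriv (fun y₁ => G y₁ ^ α₁ * G y₂ ^ α₂ * G (min y₁ y₂) ^ α₃) x₁)
      =ᶠ[nhds x₂] (fun y₂ => C * G y₂ ^ α₂) := by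
    filter_upwards [Ioi_mem_nhds hx₁₂] with y₂ hy₂
    exact hinner y₂ hy₂
  have hD2 : HasDerivAt (fun y₂ => C * G y₂ ^ α₂)
      (C * (α₂ * G x₂ ^ (α₂ - 1) * (lam * h₂ * Real.exp (-lam * H x₂)))) x₂ := by
    have := (hGd₂.rpow_const (p := α₂) (Or.inl hG₂pos.ne')).const_mul C
    refine this.congr_deriv ?_
    ring
  rw [houter.deriv_eq, hD2.deriv, hCdef]
  rw [show -lam * H x₁ - lam * H x₂ = (-lam * H x₁) + (-lam * H x₂) by ring,
    Real.exp_add]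
  ring
end

section
/- The integral over (0, ∞) of the singular-part density f₀ equals α₃/(α₁+α₂+α₃); that is, ∫_{x ∈ (0,∞)} α₃·λ·h(x)·exp(−λ·H(x))·(1 − exp(−λ·H(x)))^{α₁+α₂+α₃−1} dx = α₃/(α₁+α₂+α₃). -/
open MeasureTheory Real Filter

/-- The integral of the singular-part density `f₀` over `(0,∞)`
equals `α₃/(α₁+α₂+α₃)`. -/
theorem beew_singular_part_mass
    (lam α₁ α₂ α₃ : ℝ) (hlam : 0 < lam)
    (hα₁ : 0 < α₁) (hα₂ : 0 < α₂) (hα₃ : 0 < α₃)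
    (H h : ℝ → ℝ) (hH : ∀ x, 0 ≤ H x) (hHmono : Monotone H)
    (hH0 : H 0 = 0) (hHcont0 : ContinuousAt H 0)
    (hHpos : ∀ x : ℝ, 0 < x → 0 < H x)
    (hd : ∀ x : ℝ, 0 < x → HasDerivAt H (h x) x)
    (hHtop : Tendsto H atTop atTop) :
    ∫ x in Set.Ioi (0 : ℝ),
        α₃ * lam * h x * Real.exp (-lam * H x) *
          (1 - Real.exp (-lam * H x)) ^ (α₁ + α₂ + α₃ - 1) =
      α₃ / (α₁ + α₂ + α₃) := by
  set α : ℝ := α₁ + α₂ + α₃ with hα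
  have hαpos : 0 < α := by positivity
  set u : ℝ → ℝ := fun x => 1 - Real.exp (-lam * H x) with hu
  set g : ℝ → ℝ := fun x => (α₃ / α) * u x ^ α with hgdef
  have hh : ∀ x : ℝ, 0 < x → 0 ≤ h x := by
    intro x hx
    have ht := hasDerivAt_iff_tendsto_slope.1 (hd x hx)
    refine ge_of_tendsto ht ?_
    filter_upwards [self_mem_nhdsWithin] with y hy
    rcases lt_or_gt_of_ne (Ne.symm hy) with hlt | hgt
    · have h1 : H x ≤ H y := hHmono hlt.le
      rw [slope_def_field, div_nonneg_iff]
      left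
      constructor <;> linarith
    · have h1 : H y ≤ H x := hHmono hgt.le
      rw [slope_def_field, div_nonneg_iff]
      right
      constructor <;> linarith
  have hu_nonneg : ∀ x : ℝ, 0 ≤ u x := by
    intro x
    have : Real.exp (-lam * H x) ≤ 1 := by
      rw [Real.exp_le_one_iff]
      nlinarith [hH x]
    simp only [hu]; linarith
  have hu_pos : ∀ x : ℝ, 0 < x → 0 < u x := by
    intro x hx
    have : Real.exp (-lam * H x) < 1 := by
      rw [Real.exp_lt_one_iff]
      nlinarith [hHpos x hx]
    simp only [hu]; linarith
  have hderiv : ∀ x ∈ Set.Ioi (0 : ℝ), HasDerivAt g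
      (α₃ * lam * h x * Real.exp (-lam * H x) * u x ^ (α - 1)) x := by
    intro x hx
    have hx0 : 0 < x := hx
    have h1 : HasDerivAt (fun y => -lam * H y) (-lam * h x) x := (hd x hx0).const_mul (-lam)
    have h2 : HasDerivAt (fun y => Real.exp (-lam * H y))
        (Real.exp (-lam * H x) * (-lam * h x)) x :=
      by have := (Real.hasDerivAt_exp (-lam * H x)).comp x h1; exact this
    have h3 : HasDerivAt u (lam * h x * Real.exp (-lam * H x)) x := by
      have := h2.const_sub 1
      convert this using 1
      · rfl
      · rfl
      ring
    have hr : HasDerivAt (fun t : ℝ => t ^ α) (α * u x ^ (α - 1)) (u x) :=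
      Real.hasDerivAt_rpow_const (Or.inl (ne_of_gt (hu_pos x hx0)))
    have h4 := (hr.comp x h3).const_mul (α₃ / α)
    convert h4 using 1
    · rfl
    · rfl
    · rfl
    field_simp
  have hnonneg : ∀ x ∈ Set.Ioi (0 : ℝ),
      0 ≤ α₃ * lam * h x * Real.exp (-lam * H x) * u x ^ (α - 1) := by
    intro x hx
    have := hh x hx
    have := hu_nonneg x
    positivity
  have hcont : ContinuousWithinAt g (Set.Ici 0) 0 := by
    have hu_cont : ContinuousAt u 0 := by
      have : ContinuousAt (fun y => Real.exp (-lam * H y)) 0 :=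
        Real.continuous_exp.continuousAt.comp ((continuousAt_const.mul hHcont0))
      exact continuousAt_const.sub this
    have hr_cont : ContinuousAt (fun t : ℝ => t ^ α) (u 0) := by
      have hu0 : u 0 = 0 := by simp [hu, hH0]
      rw [hu0]
      exact Real.continuousAt_rpow_const 0 α (Or.inr hαpos.le)
    exact (continuousAt_const.mul (hr_cont.comp hu_cont)).continuousWithinAt
  have hlim : Tendsto g atTop (nhds (α₃ / α)) := by
    have h1 : Tendsto (fun x => -lam * H x) atTop atBot :=
      (tendsto_const_mul_atBot_of_neg (by linarith)).2 hHtop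
    have h2 : Tendsto (fun x => Real.exp (-lam * H x)) atTop (nhds 0) :=
      Real.tendsto_exp_atBot.comp h1
    have h3 : Tendsto u atTop (nhds 1) := by
      have h3' := (tendsto_const_nhds (α := ℝ) (x := (1:ℝ)) (f := atTop)).sub h2
      show Tendsto (fun x => 1 - Real.exp (-lam * H x)) atTop (nhds 1)
      simpa using h3'
    have h4 : Tendsto (fun x => u x ^ α) atTop (nhds 1) := by
      have hc : ContinuousAt (fun t : ℝ => t ^ α) 1 :=
        Real.continuousAt_rpow_const 1 α (Or.inl one_ne_zero)
      have := hc.tendsto.comp h3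
      simpa [Function.comp_def] using this
    have := (tendsto_const_nhds (α := ℝ) (f := atTop) (x := α₃ / α)).mul h4
    simpa using this
  have key := integral_Ioi_of_hasDerivAt_of_nonneg hcont hderiv hnonneg hlim
  have hg0 : g 0 = 0 := by
    have hu0 : u 0 = 0 := by simp [hu, hH0]
    simp [hgdef, hu0, Real.zero_rpow (ne_of_gt hαpos)]
  rw [key, hg0, sub_zero]
end

section
/- ∫_{x₂ ∈ (0,∞)} ( ∫_{x₁ ∈ (0, x₂)} f₁(x₁, x₂) dx₁ ) dx₂ = α₂/(α₁+α₂+α₃), where f₁(x₁, x₂) = (α₁+α₃)·α₂·λ²·h(x₁)·h(x₂)·(1 − exp(−λ·H(x₁)))^{α₁+α₃−1}·(1 − exp(−λ·H(x₂)))^{α₂−1}·exp(−λ·H(x₁) − λ·H(x₂)). -/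
open MeasureTheory Real Filter

section Aux

variable {lam : ℝ} {H h : ℝ → ℝ}

/-- nonnegativity of the derivative of a monotone function -/
lemma beew_h_nonneg (hHmono : Monotone H) {x : ℝ} (hdx : HasDerivAt H (h x) x) :
    0 ≤ h x := by
  have hslope : Tendsto (slope H x) (nhdsWithin x {x}ᶜ) (nhds (h x)) :=
    hasDerivAt_iff_tendsto_slope.1 hdx
  refine ge_of_tendsto hslope ?_
  filter_upwards [self_mem_nhdsWithin] with y hy
  have hyx : y ≠ x := hy
  rcases hyx.lt_or_gt with hlt | hgt
  · rw [slope_def_field]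
    refine div_nonneg_iff.2 (Or.inr ⟨?_, ?_⟩)
    · simpa using hHmono hlt.le
    · simpa using hlt.le
  · rw [slope_def_field]
    apply div_nonneg
    · simpa using hHmono hgt.le
    · simpa using hgt.le

lemma beew_b_nonneg (hlam : 0 < lam) (hH : ∀ x, 0 ≤ H x) (x : ℝ) :
    0 ≤ 1 - Real.exp (-lam * H x) := by
  have : Real.exp (-lam * H x) ≤ 1 := by
    rw [Real.exp_le_one_iff]
    have := hH x
    nlinarith
  linarith

lemma beew_b_pos (hlam : 0 < lam) (hHpos : ∀ x : ℝ, 0 < x → 0 < H x)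
    {x : ℝ} (hx : 0 < x) : 0 < 1 - Real.exp (-lam * H x) := by
  have : Real.exp (-lam * H x) < 1 := by
    rw [Real.exp_lt_one_iff]
    have := hHpos x hx
    nlinarith
  linarith

/-- the derivative of `x ↦ (1 - exp (-lam * H x))^β` at `x > 0`. -/
lemma beew_hasDerivAt (hHpos : ∀ x : ℝ, 0 < x → 0 < H x) (hlam : 0 < lam)
    (β : ℝ) {x : ℝ} (hx : 0 < x) (hdx : HasDerivAt H (h x) x) :
    HasDerivAt (fun y => (1 - Real.exp (-lam * H y)) ^ β)
      (β * lam * h x * (1 - Real.exp (-lam * H x)) ^ (β - 1) * Real.exp (-lam * H x)) x := by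
  have h1 : HasDerivAt (fun y => -lam * H y) (-lam * h x) x := hdx.const_mul (-lam)
  have h2 : HasDerivAt (fun y => Real.exp (-lam * H y))
      (Real.exp (-lam * H x) * (-lam * h x)) x := h1.exp
  have h3 : HasDerivAt (fun y => 1 - Real.exp (-lam * H y))
      (lam * h x * Real.exp (-lam * H x)) x := by
    have := h2.const_sub 1
    exact this.congr_deriv (by ring)
  have h4 : HasDerivAt (fun y : ℝ => y ^ β)
      (β * (1 - Real.exp (-lam * H x)) ^ (β - 1)) (1 - Real.exp (-lam * H x)) :=
    Real.hasDerivAt_rpow_const (Or.inl (ne_of_gt (beew_b_pos hlam hHpos hx)))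
  have := h4.comp x h3
  exact this.congr_deriv (by ring)

lemma beew_contOn (hlam : 0 < lam) (hHcont0 : ContinuousAt H 0)
    (hd : ∀ x : ℝ, 0 < x → HasDerivAt H (h x) x) {β : ℝ} (hβ : 0 ≤ β) :
    ContinuousOn (fun y => (1 - Real.exp (-lam * H y)) ^ β) (Set.Ici 0) := by
  have hHc : ContinuousOn H (Set.Ici 0) := by
    intro x hx
    rcases eq_or_lt_of_le (Set.mem_Ici.1 hx) with rfl | hx'
    · exact hHcont0.continuousWithinAt
    · exact (hd x hx').continuousAt.continuousWithinAt
  have hb : ContinuousOn (fun y => 1 - Real.exp (-lam * H y)) (Set.Ici 0) :=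
    continuousOn_const.sub (Real.continuous_exp.comp_continuousOn
      (continuousOn_const.mul hHc))
  exact hb.rpow_const fun x _ => Or.inr hβ

lemma beew_tendsto (hlam : 0 < lam) (hHtop : Tendsto H atTop atTop) (β : ℝ) :
    Tendsto (fun y => (1 - Real.exp (-lam * H y)) ^ β) atTop (nhds 1) := by
  have h1 : Tendsto (fun y => -lam * H y) atTop atBot := by
    have := hHtop.const_mul_atTop hlam
    have hneg : Tendsto (fun y => -(lam * H y)) atTop atBot := tendsto_neg_atBot_iff.2 this
    simpa [neg_mul] using hneg
  have h2 : Tendsto (fun y => Real.exp (-lam * H y)) atTop (nhds 0) :=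
    Real.tendsto_exp_atBot.comp h1
  have hb : Tendsto (fun y => 1 - Real.exp (-lam * H y)) atTop (nhds 1) := by
    have := tendsto_const_nhds (α := ℝ) (x := (1:ℝ)) (f := atTop) |>.sub h2
    simpa using this
  have hc : ContinuousAt (fun z : ℝ => z ^ β) 1 :=
    Real.continuousAt_rpow_const 1 β (Or.inl one_ne_zero)
  have := hc.tendsto.comp hb
  simpa [Real.one_rpow, Function.comp_def] using this

end Aux

/-- The double integral of `f₁` over `{0 < x₁ < x₂}` equals
`α₂/(α₁+α₂+α₃)`. -/
theorem beew_f1_mass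
    (lam α₁ α₂ α₃ : ℝ) (hlam : 0 < lam)
    (hα₁ : 0 < α₁) (hα₂ : 0 < α₂) (hα₃ : 0 < α₃)
    (H h : ℝ → ℝ) (hH : ∀ x, 0 ≤ H x) (hHmono : Monotone H)
    (hH0 : H 0 = 0) (hHcont0 : ContinuousAt H 0)
    (hHpos : ∀ x : ℝ, 0 < x → 0 < H x)
    (hd : ∀ x : ℝ, 0 < x → HasDerivAt H (h x) x)
    (hHtop : Tendsto H atTop atTop) :
    ∫ x₂ in Set.Ioi (0 : ℝ), ∫ x₁ in Set.Ioo (0 : ℝ) x₂,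
        (α₁ + α₃) * α₂ * lam ^ (2 : ℕ) * h x₁ * h x₂ *
          (1 - Real.exp (-lam * H x₁)) ^ (α₁ + α₃ - 1) *
          (1 - Real.exp (-lam * H x₂)) ^ (α₂ - 1) *
          Real.exp (-lam * H x₁ - lam * H x₂) =
      α₂ / (α₁ + α₂ + α₃) := by
  set s : ℝ := α₁ + α₂ + α₃ with hs
  have hspos : 0 < s := by positivity
  have hβ : 0 < α₁ + α₃ := by positivity
  have hh : ∀ x : ℝ, 0 < x → 0 ≤ h x := fun x hx => beew_h_nonneg hHmono (hd x hx)
  have hb0 : (1 : ℝ) - Real.exp (-lam * H 0) = 0 := by simp [hH0]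
  -- Step 1: compute the inner integral for x₂ > 0
  have hinner : ∀ x₂ : ℝ, 0 < x₂ →
      (∫ x₁ in Set.Ioo (0 : ℝ) x₂,
        (α₁ + α₃) * α₂ * lam ^ (2 : ℕ) * h x₁ * h x₂ *
          (1 - Real.exp (-lam * H x₁)) ^ (α₁ + α₃ - 1) *
          (1 - Real.exp (-lam * H x₂)) ^ (α₂ - 1) *
          Real.exp (-lam * H x₁ - lam * H x₂)) =
      α₂ * lam * h x₂ * (1 - Real.exp (-lam * H x₂)) ^ (s - 1)
        * Real.exp (-lam * H x₂) := by
    intro x₂ hx₂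
    set K : ℝ := α₂ * lam * h x₂ * (1 - Real.exp (-lam * H x₂)) ^ (α₂ - 1)
        * Real.exp (-lam * H x₂) with hK
    set D : ℝ → ℝ := fun x => (α₁ + α₃) * lam * h x *
        (1 - Real.exp (-lam * H x)) ^ (α₁ + α₃ - 1) * Real.exp (-lam * H x) with hD
    have hsplit : ∀ x₁ ∈ Set.Ioo (0:ℝ) x₂,
        (α₁ + α₃) * α₂ * lam ^ (2 : ℕ) * h x₁ * h x₂ *
          (1 - Real.exp (-lam * H x₁)) ^ (α₁ + α₃ - 1) *
          (1 - Real.exp (-lam * H x₂)) ^ (α₂ - 1) *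
          Real.exp (-lam * H x₁ - lam * H x₂) = K * D x₁ := by
      intro x₁ _
      rw [hK, hD]
      rw [show -lam * H x₁ - lam * H x₂ = (-lam * H x₁) + (-lam * H x₂) by ring,
        Real.exp_add]
      ring
    rw [setIntegral_congr_fun measurableSet_Ioo hsplit, integral_const_mul]
    -- FTC on (0, x₂)
    have hderiv : ∀ x ∈ Set.Ioo (0:ℝ) x₂,
        HasDerivAt (fun y => (1 - Real.exp (-lam * H y)) ^ (α₁ + α₃)) (D x) x := fun x hx =>
      beew_hasDerivAt hHpos hlam _ hx.1 (hd x hx.1)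
    have hDpos : ∀ x ∈ Set.Ioo (0:ℝ) x₂, 0 ≤ D x := by
      intro x hx
      have := beew_b_nonneg hlam hH x
      have := hh x hx.1
      have := Real.rpow_nonneg (beew_b_nonneg hlam hH x) (α₁ + α₃ - 1)
      have := (Real.exp_pos (-lam * H x)).le
      rw [hD]
      positivity
    have hcont : ContinuousOn (fun y => (1 - Real.exp (-lam * H y)) ^ (α₁ + α₃))
        (Set.Icc 0 x₂) :=
      (beew_contOn hlam hHcont0 hd hβ.le).mono (Set.Icc_subset_Ici_self)
    have hint : IntervalIntegrable D MeasureTheory.volume 0 x₂ := by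
      rw [intervalIntegrable_iff_integrableOn_Ioc_of_le hx₂.le]
      exact intervalIntegral.integrableOn_deriv_of_nonneg hcont hderiv hDpos
    have hFTC := intervalIntegral.integral_eq_sub_of_hasDerivAt_of_le hx₂.le hcont hderiv hint
    have hIoo : ∫ x in Set.Ioo (0:ℝ) x₂, D x = ∫ x in (0:ℝ)..x₂, D x := by
      rw [intervalIntegral.integral_of_le hx₂.le, integral_Ioc_eq_integral_Ioo]
    rw [hIoo, hFTC, hb0, Real.zero_rpow (ne_of_gt hβ), hK]
    have hbpos := beew_b_pos hlam hHpos hx₂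
    rw [sub_zero]
    rw [show α₂ * lam * h x₂ * (1 - Real.exp (-lam * H x₂)) ^ (α₂ - 1) *
        Real.exp (-lam * H x₂) * (1 - Real.exp (-lam * H x₂)) ^ (α₁ + α₃) =
        α₂ * lam * h x₂ * ((1 - Real.exp (-lam * H x₂)) ^ (α₂ - 1) *
        (1 - Real.exp (-lam * H x₂)) ^ (α₁ + α₃)) * Real.exp (-lam * H x₂) by ring,
      ← Real.rpow_add hbpos,
      show α₂ - 1 + (α₁ + α₃) = s - 1 by rw [hs]; ring]
  -- Step 2: compute the outer integral
  rw [setIntegral_congr_fun measurableSet_Ioi (fun x₂ hx₂ => hinner x₂ hx₂)]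
  have hgderiv : ∀ x ∈ Set.Ioi (0:ℝ),
      HasDerivAt (fun y => (α₂ / s) * (1 - Real.exp (-lam * H y)) ^ s)
        (α₂ * lam * h x * (1 - Real.exp (-lam * H x)) ^ (s - 1) * Real.exp (-lam * H x)) x := by
    intro x hx
    have := (beew_hasDerivAt hHpos hlam s hx (hd x hx)).const_mul (α₂ / s)
    exact this.congr_deriv (by field_simp)
  have hgpos : ∀ x ∈ Set.Ioi (0:ℝ), 0 ≤
      α₂ * lam * h x * (1 - Real.exp (-lam * H x)) ^ (s - 1) * Real.exp (-lam * H x) := by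
    intro x hx
    have := hh x hx
    have := Real.rpow_nonneg (beew_b_nonneg hlam hH x) (s - 1)
    have := (Real.exp_pos (-lam * H x)).le
    positivity
  have hgcont : ContinuousWithinAt (fun y => (α₂ / s) * (1 - Real.exp (-lam * H y)) ^ s)
      (Set.Ici 0) 0 :=
    ((beew_contOn hlam hHcont0 hd hspos.le).const_smul (α₂ / s)) 0 Set.self_mem_Ici
  have hgtend : Tendsto (fun y => (α₂ / s) * (1 - Real.exp (-lam * H y)) ^ s) atTop
      (nhds (α₂ / s)) := by
    have := (beew_tendsto hlam hHtop s).const_mul (α₂ / s)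
    simpa using this
  rw [MeasureTheory.integral_Ioi_of_hasDerivAt_of_nonneg hgcont hgderiv hgpos hgtend]
  rw [hb0, Real.zero_rpow (ne_of_gt hspos)]
  ring
end

section
/- Let 0 < x₂ and assume h(x₂) ≠ 0, H(x₁) > 0 and H(x₂) > 0. Writing f_EEW(x; α) = α·λ·h(x)·exp(−λ·H(x))·(1 − exp(−λ·H(x)))^{α−1} for the EEW density, the conditional density of X₁ given X₂ = x₂ satisfies: (i) if 0 < x₁ < x₂ then f₁(x₁,x₂)/f_EEW(x₂; α₂+α₃) = (α₁+α₃)·α₂·λ·h(x₁)·(1 − exp(−λ·H(x₁)))^{α₁+α₃−1}·exp(−λ·H(x₁)) / ((α₂+α₃)·(1 − exp(−λ·H(x₂)))^{α₃}), where f₁(x₁,x₂) = f_EEW(x₁; α₁+α₃)·f_EEW(x₂; α₂); and (ii) if 0 < x₂ < x₁ then f₂(x₁,x₂)/f_EEW(x₂; α₂+α₃) = α₁·λ·h(x₁)·(1 − exp(−λ·H(x₁)))^{α₁−1}·exp(−λ·H(x₁)), where f₂(x₁,x₂) = f_EEW(x₁; α₁)·f_EEW(x₂; α₂+α₃). -/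
open Real

/-- Conditional densities of `X₁` given `X₂ = x₂` for the BEEW
distribution, below and above the diagonal. Here
`f_EEW(x; α) = α·λ·h(x)·exp(−λH(x))·(1 − exp(−λH(x)))^(α−1)`. -/
theorem beew_conditional_density
    (lam α₁ α₂ α₃ : ℝ) (hlam : 0 < lam)
    (hα₁ : 0 < α₁) (hα₂ : 0 < α₂) (hα₃ : 0 < α₃)
    (H h : ℝ → ℝ) (hH : ∀ x, 0 ≤ H x)
    (fEEW : ℝ → ℝ → ℝ)
    (hf : ∀ x α, fEEW x α = α * lam * h x * Real.exp (-lam * H x) *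
      (1 - Real.exp (-lam * H x)) ^ (α - 1))
    (x₁ x₂ : ℝ) (hx₂ : 0 < x₂) (hh₂ : h x₂ ≠ 0)
    (hH₁ : 0 < H x₁) (hH₂ : 0 < H x₂) :
    (0 < x₁ → x₁ < x₂ →
      fEEW x₁ (α₁ + α₃) * fEEW x₂ α₂ / fEEW x₂ (α₂ + α₃) =
        (α₁ + α₃) * α₂ * lam * h x₁ *
            (1 - Real.exp (-lam * H x₁)) ^ (α₁ + α₃ - 1) *
            Real.exp (-lam * H x₁) /
          ((α₂ + α₃) * (1 - Real.exp (-lam * H x₂)) ^ α₃)) ∧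
    (x₂ < x₁ →
      fEEW x₁ α₁ * fEEW x₂ (α₂ + α₃) / fEEW x₂ (α₂ + α₃) =
        α₁ * lam * h x₁ * (1 - Real.exp (-lam * H x₁)) ^ (α₁ - 1) *
          Real.exp (-lam * H x₁)) := by

  have hu₂ : 0 < 1 - Real.exp (-lam * H x₂) := by
    have : Real.exp (-lam * H x₂) < 1 := by
      apply Real.exp_lt_one_iff.2
      nlinarith
    linarith
  have he₂ : Real.exp (-lam * H x₂) ≠ 0 := Real.exp_ne_zero _
  have hp1 : (1 - Real.exp (-lam * H x₂)) ^ (α₂ - 1) ≠ 0 :=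
    (Real.rpow_pos_of_pos hu₂ _).ne'
  have hp2 : (1 - Real.exp (-lam * H x₂)) ^ α₃ ≠ 0 :=
    (Real.rpow_pos_of_pos hu₂ _).ne'
  have hp3 : (1 - Real.exp (-lam * H x₂)) ^ (α₂ + α₃ - 1) ≠ 0 :=
    (Real.rpow_pos_of_pos hu₂ _).ne'
  have hα23 : α₂ + α₃ ≠ 0 := by positivity
  have hfne : fEEW x₂ (α₂ + α₃) ≠ 0 := by
    rw [hf]
    exact mul_ne_zero (mul_ne_zero (mul_ne_zero (mul_ne_zero hα23 hlam.ne') hh₂) he₂) hp3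
  have key : (1 - Real.exp (-lam * H x₂)) ^ (α₂ + α₃ - 1) =
      (1 - Real.exp (-lam * H x₂)) ^ (α₂ - 1) * (1 - Real.exp (-lam * H x₂)) ^ α₃ := by
    rw [← Real.rpow_add hu₂]; ring_nf
  constructor
  · intro _ _
    rw [hf, hf, hf, key, div_eq_div_iff
      (mul_ne_zero (mul_ne_zero (mul_ne_zero (mul_ne_zero hα23 hlam.ne') hh₂) he₂)
        (mul_ne_zero hp1 hp2))
      (mul_ne_zero hα23 hp2)]
    ring
  · intro _
    rw [mul_div_assoc, div_self hfne, mul_one, hf]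
    ring
end

section
/- Assume H is monotone increasing. For i = 1, 2 set θᵢ = α₃/(αᵢ+α₃) and uᵢ = G(xᵢ)^{αᵢ+α₃}. Then for all x₁, x₂ ∈ ℝ, the Marshall–Olkin copula evaluated at the marginals recovers the BEEW joint cdf: u₁^{1−θ₁} · u₂^{1−θ₂} · min(u₁^{θ₁}, u₂^{θ₂}) = G(x₁)^{α₁} · G(x₂)^{α₂} · G(min(x₁,x₂))^{α₃}. -/
open Real

/-- The Marshall–Olkin copula with parameters `θᵢ = α₃/(αᵢ+α₃)`
evaluated at the EEW marginals `uᵢ = G(xᵢ)^(αᵢ+α₃)` recovers the BEEW joint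
cdf. -/
theorem beew_marshall_olkin_copula
    (lam α₁ α₂ α₃ : ℝ) (hlam : 0 < lam)
    (hα₁ : 0 < α₁) (hα₂ : 0 < α₂) (hα₃ : 0 < α₃)
    (H : ℝ → ℝ) (hH : ∀ x, 0 ≤ H x) (hHmono : Monotone H)
    (G : ℝ → ℝ) (hG : ∀ x, G x = 1 - Real.exp (-lam * H x))
    (x₁ x₂ : ℝ) :
    (G x₁ ^ (α₁ + α₃)) ^ (1 - α₃ / (α₁ + α₃)) *
        (G x₂ ^ (α₂ + α₃)) ^ (1 - α₃ / (α₂ + α₃)) *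
        min ((G x₁ ^ (α₁ + α₃)) ^ (α₃ / (α₁ + α₃)))
          ((G x₂ ^ (α₂ + α₃)) ^ (α₃ / (α₂ + α₃))) =
      G x₁ ^ α₁ * G x₂ ^ α₂ * G (min x₁ x₂) ^ α₃ := by
  have hGnn : ∀ x, 0 ≤ G x := by
    intro x
    rw [hG x]
    have : Real.exp (-lam * H x) ≤ 1 := by
      apply Real.exp_le_one_iff.mpr
      have := hH x
      nlinarith
    linarith
  have hGmono : Monotone G := by
    intro a b hab
    rw [hG a, hG b]
    have : Real.exp (-lam * H b) ≤ Real.exp (-lam * H a) := by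
      apply Real.exp_le_exp.mpr
      have := hHmono hab
      nlinarith
    linarith
  have h13 : (0:ℝ) < α₁ + α₃ := by linarith
  have h23 : (0:ℝ) < α₂ + α₃ := by linarith
  have e1 : (G x₁ ^ (α₁ + α₃)) ^ (1 - α₃ / (α₁ + α₃)) = G x₁ ^ α₁ := by
    rw [← Real.rpow_mul (hGnn x₁)]
    congr 1
    field_simp
    ring
  have e2 : (G x₂ ^ (α₂ + α₃)) ^ (1 - α₃ / (α₂ + α₃)) = G x₂ ^ α₂ := by
    rw [← Real.rpow_mul (hGnn x₂)]
    congr 1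
    field_simp
    ring
  have e3 : ∀ x (α : ℝ), 0 < α + α₃ → (G x ^ (α + α₃)) ^ (α₃ / (α + α₃)) = G x ^ α₃ := by
    intro x α hpos
    rw [← Real.rpow_mul (hGnn x)]
    congr 1
    field_simp
  have e4 : min ((G x₁ ^ (α₁ + α₃)) ^ (α₃ / (α₁ + α₃)))
      ((G x₂ ^ (α₂ + α₃)) ^ (α₃ / (α₂ + α₃))) = G (min x₁ x₂) ^ α₃ := by
    rw [e3 x₁ α₁ h13, e3 x₂ α₂ h23]
    rcases le_total x₁ x₂ with h | h
    · rw [min_eq_left h, min_eq_left (Real.rpow_le_rpow (hGnn x₁) (hGmono h) hα₃.le)]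
    · rw [min_eq_right h, min_eq_right (Real.rpow_le_rpow (hGnn x₂) (hGmono h) hα₃.le)]
  rw [e1, e2, e4]
end

section
/- Assume moreover that H is continuous. Then ℙ(X₁ = X₂) = α₃/(α₁+α₂+α₃); that is, the singular part of the BEEW distribution along the diagonal has weight α₃/(α₁+α₂+α₃). -/
open MeasureTheory ProbabilityTheory Real Set Filter Topology
open scoped ENNReal NNReal


/-- A probability measure on ℝ with continuous CDF has no atoms. -/
lemma aux_singleton (μ : Measure ℝ) [IsProbabilityMeasure μ] (F : ℝ → ℝ)
    (hF : Continuous F) (h : ∀ x, μ (Iic x) = ENNReal.ofReal (F x)) (x : ℝ) : μ {x} = 0 := by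
  have key : ∀ y, y < x → μ {x} ≤ ENNReal.ofReal (F x) - ENNReal.ofReal (F y) := by
    intro y hy
    have h1 : μ {x} ≤ μ (Ioc y x) := measure_mono (by
      intro z hz
      simp only [mem_singleton_iff] at hz
      subst hz
      exact ⟨hy, le_rfl⟩)
    have h2 : μ (Ioc y x) = μ (Iic x) - μ (Iic y) := by
      rw [show Ioc y x = Iic x \ Iic y by ext z; simp [and_comm],
        measure_diff (Iic_subset_Iic.2 hy.le) measurableSet_Iic.nullMeasurableSet
          (measure_ne_top μ _)]
    rw [h2, h x, h y] at h1
    exact h1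
  have htt : Tendsto (fun n : ℕ => x - 1 / (n + 1)) atTop (𝓝 x) := by
    have h0 := tendsto_one_div_add_atTop_nhds_zero_nat (𝕜 := ℝ)
    have := (tendsto_const_nhds (x := x) (f := (atTop : Filter ℕ))).sub h0
    simpa using this
  have htF : Tendsto (fun n : ℕ =>
      ENNReal.ofReal (F x) - ENNReal.ofReal (F (x - 1 / (n + 1)))) atTop (𝓝 0) := by
    have h1 : Tendsto (fun n : ℕ => ENNReal.ofReal (F (x - 1 / (n + 1)))) atTop
        (𝓝 (ENNReal.ofReal (F x))) :=
      (ENNReal.continuous_ofReal.tendsto _).comp ((hF.tendsto x).comp htt)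
    have h2 := ENNReal.Tendsto.sub (tendsto_const_nhds
      (x := ENNReal.ofReal (F x)) (f := (atTop : Filter ℕ))) h1 (Or.inl ENNReal.ofReal_ne_top)
    simpa using h2
  refine le_antisymm ?_ zero_le
  refine ge_of_tendsto htF (Eventually.of_forall fun n => ?_)
  refine key _ ?_
  have : (0:ℝ) < 1 / (n + 1) := by positivity
  linarith


lemma aux_diag {Ω : Type*} [MeasurableSpace Ω] (P : Measure Ω) [IsProbabilityMeasure P]
    (X Y : Ω → ℝ) (hX : Measurable X) (hY : Measurable Y)
    (hindep : IndepFun X Y P) (hY0 : ∀ x, P.map Y {x} = 0) :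
    P {ω | X ω = Y ω} = 0 := by
  have hd : MeasurableSet {p : ℝ × ℝ | p.1 = p.2} :=
    measurableSet_eq_fun measurable_fst measurable_snd
  have hmap := (indepFun_iff_map_prod_eq_prod_map_map hX.aemeasurable hY.aemeasurable).1 hindep
  have h1 : P {ω | X ω = Y ω} = (P.map fun ω => (X ω, Y ω)) {p : ℝ × ℝ | p.1 = p.2} := by
    rw [Measure.map_apply (hX.prodMk hY) hd]
    rfl
  rw [h1, hmap, Measure.prod_apply hd]
  have h2 : ∀ x : ℝ, (P.map Y) (Prod.mk x ⁻¹' {p : ℝ × ℝ | p.1 = p.2}) = 0 := by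
    intro x
    have : Prod.mk x ⁻¹' {p : ℝ × ℝ | p.1 = p.2} = {x} := by
      ext y; simp [eq_comm]
    rw [this]
    exact hY0 x
  rw [lintegral_congr h2, lintegral_zero]


lemma aux_pit (ν : Measure ℝ) [IsProbabilityMeasure ν]
    (G : ℝ → ℝ) (hmono : Monotone G) (hGcont : Continuous G)
    (b : ℝ) (hb : 0 < b)
    (hν : ∀ x, ν (Iic x) = ENNReal.ofReal (G x ^ b))
    (hlow : ∀ u : ℝ, 0 < u → ∃ z, G z < u)
    (hhigh : ∀ u : ℝ, u < 1 → ∃ w, u < G w)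
    (u : ℝ) (hu0 : 0 < u) (hu1 : u < 1) :
    ν {z | G z ≤ u} = ENNReal.ofReal (u ^ b) := by
  obtain ⟨z₀, hz₀⟩ := hlow u hu0
  obtain ⟨w₀, hw₀⟩ := hhigh u hu1
  set S : Set ℝ := {z | G z ≤ u} with hSdef
  have hSne : S.Nonempty := ⟨z₀, hz₀.le⟩
  have hSbdd : BddAbove S := by
    refine ⟨w₀, fun z hz => ?_⟩
    by_contra hc
    push_neg at hc
    have : G w₀ ≤ G z := hmono hc.le
    have hzu : G z ≤ u := hz
    linarith
  have hSclosed : IsClosed S := IsClosed.preimage hGcont isClosed_Iic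
  have hmem : sSup S ∈ S := hSclosed.csSup_mem hSne hSbdd
  have hle : G (sSup S) ≤ u := hmem
  -- IVT gives a point where G equals u
  have hzw : z₀ ≤ w₀ := by
    by_contra hc
    push_neg at hc
    have := hmono hc.le
    linarith
  obtain ⟨c, _, hc⟩ := intermediate_value_Icc hzw hGcont.continuousOn
    (show u ∈ Icc (G z₀) (G w₀) from ⟨hz₀.le, hw₀.le⟩)
  have hcS : c ∈ S := le_of_eq hc
  have hge : u ≤ G (sSup S) := hc ▸ hmono (le_csSup hSbdd hcS)
  have hGx : G (sSup S) = u := le_antisymm hle hge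
  have hSIic : S = Iic (sSup S) := by
    ext z
    constructor
    · exact fun hz => le_csSup hSbdd hz
    · intro hz
      exact le_trans (hmono hz) hle
  rw [hSIic, hν, hGx]

lemma aux_integral (μ ν : Measure ℝ) [IsProbabilityMeasure μ] [IsProbabilityMeasure ν]
    (G : ℝ → ℝ) (hG0 : ∀ x, 0 ≤ G x) (hG1 : ∀ x, G x < 1)
    (hmono : Monotone G) (hGcont : Continuous G)
    (a b : ℝ) (ha : 0 < a) (hb : 0 < b)
    (hμ : ∀ x, μ (Iic x) = ENNReal.ofReal (G x ^ a))
    (hν : ∀ x, ν (Iic x) = ENNReal.ofReal (G x ^ b)) :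
    ∫⁻ z, μ (Iic z) ∂ν = ENNReal.ofReal (b / (a + b)) := by
  -- G gets arbitrarily close to 0 and 1
  have hlow : ∀ u : ℝ, 0 < u → ∃ z, G z < u := by
    intro u hu0
    by_contra hc
    push_neg at hc
    have hiE : (⋂ n : ℕ, Iic (-(n : ℝ))) = (∅ : Set ℝ) := by
      ext x
      simp only [mem_iInter, mem_Iic, mem_empty_iff_false, iff_false, not_forall]
      obtain ⟨n, hn⟩ := exists_nat_gt (-x)
      exact ⟨n, by push_neg; linarith⟩
    have htend : Tendsto (fun n : ℕ => ν (Iic (-(n : ℝ)))) atTop (𝓝 0) := by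
      have := tendsto_measure_iInter_atTop (μ := ν)
        (s := fun n : ℕ => Iic (-(n : ℝ)))
        (fun n => measurableSet_Iic.nullMeasurableSet)
        (fun m n hmn => Iic_subset_Iic.2 (by exact_mod_cast neg_le_neg (by exact_mod_cast hmn)))
        ⟨0, measure_ne_top ν _⟩
      rwa [hiE, measure_empty] at this
    have hlb : ∀ n : ℕ, ENNReal.ofReal (u ^ b) ≤ ν (Iic (-(n : ℝ))) := by
      intro n
      rw [hν]
      exact ENNReal.ofReal_le_ofReal (Real.rpow_le_rpow hu0.le (hc _) hb.le)
    have := ge_of_tendsto htend (Eventually.of_forall hlb)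
    have hpos : 0 < ENNReal.ofReal (u ^ b) :=
      ENNReal.ofReal_pos.2 (Real.rpow_pos_of_pos hu0 b)
    exact absurd this (by simpa using hpos.ne')
  have hhigh : ∀ u : ℝ, u < 1 → ∃ w, u < G w := by
    intro u hu1
    rcases lt_or_ge u 0 with hu | hu
    · exact ⟨0, lt_of_lt_of_le hu (hG0 0)⟩
    · by_contra hc
      push_neg at hc
      have htend : Tendsto (fun x : ℝ => ν (Iic x)) atTop (𝓝 1) := by
        have := tendsto_measure_Iic_atTop (μ := ν)
        rwa [measure_univ] at this
      have hub : ∀ x : ℝ, ν (Iic x) ≤ ENNReal.ofReal (u ^ b) := by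
        intro x
        rw [hν]
        exact ENNReal.ofReal_le_ofReal (Real.rpow_le_rpow (hG0 x) (hc x) hb.le)
      have h1 : (1 : ℝ≥0∞) ≤ ENNReal.ofReal (u ^ b) :=
        le_of_tendsto htend (Eventually.of_forall hub)
      have h2 : ENNReal.ofReal (u ^ b) < 1 := by
        rw [← ENNReal.ofReal_one]
        exact ENNReal.ofReal_lt_ofReal_iff_of_nonneg (Real.rpow_nonneg hu _) |>.2
          (Real.rpow_lt_one hu hu1 hb)
      exact absurd (lt_of_le_of_lt h1 h2) (lt_irrefl _)
  set r : ℝ := b / a with hrdef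
  have hr : 0 < r := div_pos hb ha
  -- rewrite the integrand and apply the layer cake formula
  have hfmono : Monotone fun z => G z ^ a :=
    fun x y hxy => Real.rpow_le_rpow (hG0 x) (hmono hxy) ha.le
  have hstep1 : ∫⁻ z, μ (Iic z) ∂ν = ∫⁻ z, ENNReal.ofReal (G z ^ a) ∂ν :=
    lintegral_congr fun z => hμ z
  rw [hstep1, lintegral_eq_lintegral_meas_lt ν
    (Eventually.of_forall fun z => Real.rpow_nonneg (hG0 z) a)
    hfmono.measurable.aemeasurable]
  -- compute the measure of the upper level sets
  have hlevel : ∀ t ∈ Ioi (0:ℝ), ν {z | t < G z ^ a} = ENNReal.ofReal (1 - t ^ r) := by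
    intro t ht
    simp only [mem_Ioi] at ht
    rcases le_or_gt 1 t with ht1 | ht1
    · have hempty : {z : ℝ | t < G z ^ a} = ∅ := by
        ext z
        simp only [mem_setOf_eq, mem_empty_iff_false, iff_false, not_lt]
        exact le_trans (le_of_lt (Real.rpow_lt_one (hG0 z) (hG1 z) ha)) ht1
      rw [hempty, measure_empty]
      symm
      rw [ENNReal.ofReal_eq_zero]
      have : (1:ℝ) ≤ t ^ r := Real.one_le_rpow ht1 hr.le
      linarith
    · set s : ℝ := t ^ a⁻¹ with hsdef
      have hs0 : 0 < s := Real.rpow_pos_of_pos ht _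
      have hs1 : s < 1 := Real.rpow_lt_one ht.le ht1 (by positivity)
      have hiff : ∀ z, (t < G z ^ a ↔ ¬ G z ≤ s) := by
        intro z
        rw [not_le]
        constructor
        · intro hlt
          by_contra hcon
          push_neg at hcon
          have := Real.rpow_le_rpow (hG0 z) hcon ha.le
          rw [hsdef, Real.rpow_inv_rpow ht.le ha.ne'] at this
          linarith
        · intro hlt
          have := Real.rpow_le_rpow hs0.le hlt.le ha.le
          rw [hsdef, Real.rpow_inv_rpow ht.le ha.ne'] at this
          rcases eq_or_lt_of_le this with heq | h
          · -- t = G z ^ a would give s = G z, contradiction with s < G z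
            have h2 := Real.rpow_lt_rpow hs0.le hlt ha
            rw [hsdef, Real.rpow_inv_rpow ht.le ha.ne'] at h2
            exact h2
          · exact h
      have hsetc : {z : ℝ | t < G z ^ a} = {z : ℝ | G z ≤ s}ᶜ := by
        ext z
        simp [hiff z]
      have hmeas : MeasurableSet {z : ℝ | G z ≤ s} :=
        hGcont.measurable measurableSet_Iic
      rw [hsetc, measure_compl hmeas (measure_ne_top ν _),
        aux_pit ν G hmono hGcont b hb hν hlow hhigh s hs0 hs1, measure_univ]
      have hsb : s ^ b = t ^ r := by
        rw [hsdef, ← Real.rpow_mul ht.le, hrdef, inv_mul_eq_div]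
      rw [hsb, ← ENNReal.ofReal_one, ← ENNReal.ofReal_sub _ (Real.rpow_nonneg ht.le _)]
  rw [setLIntegral_congr_fun measurableSet_Ioi hlevel]
  -- split the integral at 1
  have hsplit : (Ioi (0:ℝ)) = Ioc 0 1 ∪ Ioi 1 := (Ioc_union_Ioi_eq_Ioi zero_le_one).symm
  rw [hsplit, lintegral_union measurableSet_Ioi Ioc_disjoint_Ioi_same]
  have hzero : ∫⁻ t in Ioi (1:ℝ), ENNReal.ofReal (1 - t ^ r) = 0 := by
    rw [setLIntegral_congr_fun measurableSet_Ioi (fun t ht => ?_),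
      lintegral_zero]
    have : (1:ℝ) ≤ t ^ r := Real.one_le_rpow (le_of_lt ht) hr.le
    rw [ENNReal.ofReal_eq_zero]
    linarith
  rw [hzero, add_zero]
  -- compute the main integral
  have hint : IntegrableOn (fun t : ℝ => 1 - t ^ r) (Ioc 0 1) := by
    have h1 : IntervalIntegrable (fun t : ℝ => t ^ r) volume 0 1 :=
      intervalIntegral.intervalIntegrable_rpow' (by linarith)
    have h2 : IntegrableOn (fun t : ℝ => t ^ r) (Ioc 0 1) := by
      rw [← intervalIntegrable_iff_integrableOn_Ioc_of_le zero_le_one]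
      exact h1
    exact (integrableOn_const measure_Ioc_lt_top.ne).sub h2
  have hnn : 0 ≤ᵐ[volume.restrict (Ioc (0:ℝ) 1)] fun t => 1 - t ^ r := by
    rw [EventuallyLE, ae_restrict_iff' measurableSet_Ioc]
    refine Eventually.of_forall fun t ht => ?_
    have : t ^ r ≤ 1 := Real.rpow_le_one ht.1.le ht.2 hr.le
    simp only [Pi.zero_apply]
    linarith
  rw [← ofReal_integral_eq_lintegral_ofReal hint hnn]
  congr 1
  have hcalc : ∫ t in Ioc (0:ℝ) 1, (1 - t ^ r) = 1 - 1 / (r + 1) := by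
    rw [← intervalIntegral.integral_of_le zero_le_one]
    rw [intervalIntegral.integral_sub intervalIntegrable_const
      (intervalIntegral.intervalIntegrable_rpow' (by linarith))]
    rw [integral_rpow (Or.inl (by linarith))]
    simp only [intervalIntegral.integral_const, smul_eq_mul, mul_one, sub_zero]
    rw [Real.one_rpow, Real.zero_rpow (by linarith)]
    ring
  rw [hcalc, hrdef]
  have h1 : b / a + 1 ≠ 0 := by positivity
  have h2 : a + b ≠ 0 := by positivity
  field_simp
  ring

/-- With `H` continuous, the singular part along the diagonal has
weight `ℙ(X₁ = X₂) = α₃/(α₁+α₂+α₃)`. -/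
theorem beew_diagonal_mass
    {Ω : Type*} [MeasurableSpace Ω] (P : Measure Ω) [IsProbabilityMeasure P]
    (lam : ℝ) (hlam : 0 < lam)
    (α : Fin 3 → ℝ) (hα : ∀ i, 0 < α i)
    (H : ℝ → ℝ) (hH : ∀ x, 0 ≤ H x) (hHcont : Continuous H)
    (U : Fin 3 → Ω → ℝ) (hUmeas : ∀ i, Measurable (U i))
    (hindep : iIndepFun U P)
    (hcdf : ∀ i x, P {ω | U i ω ≤ x} =
      ENNReal.ofReal ((1 - Real.exp (-lam * H x)) ^ (α i))) :
    P {ω | max (U 0 ω) (U 2 ω) = max (U 1 ω) (U 2 ω)} =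
      ENNReal.ofReal (α 2 / (α 0 + α 1 + α 2)) := by
  set G : ℝ → ℝ := fun x => 1 - Real.exp (-lam * H x) with hGdef
  have hG0 : ∀ x, 0 ≤ G x := by
    intro x
    have h1 : Real.exp (-lam * H x) ≤ 1 := by
      rw [Real.exp_le_one_iff]
      have := hH x
      nlinarith
    simp only [hGdef]
    linarith
  have hG1 : ∀ x, G x < 1 := by
    intro x
    have := Real.exp_pos (-lam * H x)
    simp only [hGdef]
    linarith
  have hGcont : Continuous G :=
    continuous_const.sub (Real.continuous_exp.comp (continuous_const.mul hHcont))
  -- CDFs in terms of the mapped measures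
  have hμinst : ∀ i, IsProbabilityMeasure (P.map (U i)) :=
    fun i => Measure.isProbabilityMeasure_map (hUmeas i).aemeasurable
  have hμIic : ∀ i x, P.map (U i) (Iic x) = ENNReal.ofReal (G x ^ α i) := by
    intro i x
    rw [Measure.map_apply (hUmeas i) measurableSet_Iic]
    exact hcdf i x
  -- Monotonicity of G
  have hmono : Monotone G := by
    intro x y hxy
    have hsub : {ω | U 0 ω ≤ x} ⊆ {ω | U 0 ω ≤ y} := fun ω h => le_trans h hxy
    have := measure_mono (μ := P) hsub
    rw [hcdf 0 x, hcdf 0 y] at this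
    have h2 : G x ^ α 0 ≤ G y ^ α 0 :=
      (ENNReal.ofReal_le_ofReal_iff (Real.rpow_nonneg (hG0 y) _)).1 this
    exact (Real.rpow_le_rpow_iff (hG0 x) (hG0 y) (hα 0)).1 h2
  -- the diagonal {U 0 = U 1} is null
  haveI := hμinst 1
  have hF1cont : Continuous fun x => G x ^ α 1 :=
    hGcont.rpow_const fun x => Or.inr (hα 1).le
  have hsing : ∀ x, P.map (U 1) {x} = 0 :=
    aux_singleton (P.map (U 1)) _ hF1cont (hμIic 1)
  have h01 : IndepFun (U 0) (U 1) P := hindep.indepFun (by decide)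
  have hdiag : P {ω | U 0 ω = U 1 ω} = 0 :=
    aux_diag P (U 0) (U 1) (hUmeas 0) (hUmeas 1) h01 hsing
  -- the maximum of the first two
  set W : Ω → ℝ := fun ω => max (U 0 ω) (U 1 ω) with hWdef
  have hWmeas : Measurable W := (hUmeas 0).max (hUmeas 1)
  haveI : IsProbabilityMeasure (P.map W) := Measure.isProbabilityMeasure_map hWmeas.aemeasurable
  have hWIic : ∀ z, P.map W (Iic z) = ENNReal.ofReal (G z ^ (α 0 + α 1)) := by
    intro z
    rw [Measure.map_apply hWmeas measurableSet_Iic]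
    have hset : W ⁻¹' Iic z = U 0 ⁻¹' Iic z ∩ U 1 ⁻¹' Iic z := by
      ext ω
      simp [hWdef, max_le_iff]
    rw [hset, h01.measure_inter_preimage_eq_mul _ _ measurableSet_Iic measurableSet_Iic]
    have e0 : P (U 0 ⁻¹' Iic z) = ENNReal.ofReal (G z ^ α 0) := hcdf 0 z
    have e1 : P (U 1 ⁻¹' Iic z) = ENNReal.ofReal (G z ^ α 1) := hcdf 1 z
    rw [e0, e1, ← ENNReal.ofReal_mul (Real.rpow_nonneg (hG0 z) _)]
    congr 1
    exact (Real.rpow_add' (hG0 z) (ne_of_gt (add_pos (hα 0) (hα 1)))).symm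
  -- event reduction
  have hBA : {ω | W ω ≤ U 2 ω} ⊆
      {ω | max (U 0 ω) (U 2 ω) = max (U 1 ω) (U 2 ω)} := by
    intro ω hω
    simp only [mem_setOf_eq, hWdef] at hω
    have h := max_le_iff.1 hω
    simp only [mem_setOf_eq]
    rw [max_eq_right h.1, max_eq_right h.2]
  have hABD : {ω | max (U 0 ω) (U 2 ω) = max (U 1 ω) (U 2 ω)} ⊆
      {ω | W ω ≤ U 2 ω} ∪ {ω | U 0 ω = U 1 ω} := by
    intro ω hω
    simp only [mem_setOf_eq] at hω
    by_cases h0 : U 0 ω ≤ U 2 ω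
    · by_cases h1 : U 1 ω ≤ U 2 ω
      · exact Or.inl (max_le h0 h1)
      · push_neg at h1
        rw [max_eq_right h0, max_eq_left h1.le] at hω
        exact absurd hω (ne_of_lt h1)
    · push_neg at h0
      by_cases h1 : U 1 ω ≤ U 2 ω
      · rw [max_eq_left h0.le, max_eq_right h1] at hω
        exact absurd hω.symm (ne_of_lt h0)
      · push_neg at h1
        rw [max_eq_left h0.le, max_eq_left h1.le] at hω
        exact Or.inr hω
  have hPeq : P {ω | max (U 0 ω) (U 2 ω) = max (U 1 ω) (U 2 ω)} =
      P {ω | W ω ≤ U 2 ω} := by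
    refine le_antisymm ?_ (measure_mono hBA)
    calc P {ω | max (U 0 ω) (U 2 ω) = max (U 1 ω) (U 2 ω)}
        ≤ P ({ω | W ω ≤ U 2 ω} ∪ {ω | U 0 ω = U 1 ω}) := measure_mono hABD
      _ ≤ P {ω | W ω ≤ U 2 ω} + P {ω | U 0 ω = U 1 ω} := measure_union_le _ _
      _ = P {ω | W ω ≤ U 2 ω} := by rw [hdiag, add_zero]
  rw [hPeq]
  -- independence of U 2 and W
  have hWindep : IndepFun (U 2) W P := by
    have h1 := hindep.indepFun_prodMk hUmeas 0 1 2 (by decide) (by decide)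
    have h2 := h1.comp (measurable_fst.max measurable_snd) measurable_id
    exact h2.symm
  -- write the probability as an integral
  have hpair : Measurable fun ω => (U 2 ω, W ω) := (hUmeas 2).prodMk hWmeas
  have hsetle : MeasurableSet {p : ℝ × ℝ | p.2 ≤ p.1} :=
    measurableSet_le measurable_snd measurable_fst
  have hP2 : P {ω | W ω ≤ U 2 ω} = ∫⁻ z, P.map W (Iic z) ∂(P.map (U 2)) := by
    have e1 : P {ω | W ω ≤ U 2 ω} =
        (P.map fun ω => (U 2 ω, W ω)) {p : ℝ × ℝ | p.2 ≤ p.1} := by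
      rw [Measure.map_apply hpair hsetle]
      rfl
    rw [e1, (indepFun_iff_map_prod_eq_prod_map_map (hUmeas 2).aemeasurable
      hWmeas.aemeasurable).1 hWindep, Measure.prod_apply hsetle]
    rfl
  rw [hP2]
  haveI := hμinst 2
  have := aux_integral (P.map W) (P.map (U 2)) G hG0 hG1 hmono hGcont
    (α 0 + α 1) (α 2) (add_pos (hα 0) (hα 1)) (hα 2) hWIic (hμIic 2)
  rw [this]
end

section
/- ℙ(U₃ < U₁) = α₁/(α₁+α₃). -/
open MeasureTheory ProbabilityTheory Real Set Filter Topology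

private lemma eew_aux_mono (μ : Measure ℝ) (F : ℝ → ℝ) (α : ℝ) (hα : 0 < α)
    (hF0 : ∀ x, 0 ≤ F x)
    (hcdf : ∀ x, μ (Iic x) = ENNReal.ofReal (F x ^ α)) : Monotone F := by
  intro x y hxy
  by_contra h
  push_neg at h
  have h1 : μ (Iic x) ≤ μ (Iic y) := measure_mono (Iic_subset_Iic.2 hxy)
  rw [hcdf, hcdf] at h1
  have h2 : F x ^ α ≤ F y ^ α :=
    (ENNReal.ofReal_le_ofReal_iff (Real.rpow_nonneg (hF0 y) _)).1 h1
  have h3 : F y ^ α < F x ^ α := Real.rpow_lt_rpow (hF0 y) h hα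
  linarith

private lemma eew_aux_compl (μ : Measure ℝ) [IsProbabilityMeasure μ] (F : ℝ → ℝ) (α : ℝ)
    (hα : 0 < α) (hF0 : ∀ x, 0 ≤ F x) (hF1 : ∀ x, F x < 1) (hFc : Continuous F)
    (hcdf : ∀ x, μ (Iic x) = ENNReal.ofReal (F x ^ α)) (u : ℝ) (hu0 : 0 < u) (hu1 : u < 1) :
    μ {x | u < F x} = 1 - ENNReal.ofReal (u ^ α) := by
  have hmono : Monotone F := eew_aux_mono μ F α hα hF0 hcdf
  set S : Set ℝ := {x | F x ≤ u} with hSdef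
  have hSclosed : IsClosed S := isClosed_le hFc continuous_const
  -- S is nonempty
  have hbot : Tendsto (fun x : ℝ => μ (Iic x)) atBot (𝓝 0) := by
    have h := tendsto_measure_iInter_atBot (μ := μ) (s := fun x : ℝ => Iic x)
      (fun x => measurableSet_Iic.nullMeasurableSet) monotone_Iic ⟨0, measure_ne_top _ _⟩
    have he : (⋂ x : ℝ, Iic x) = (∅ : Set ℝ) := by
      ext y; simp only [mem_iInter, mem_Iic, mem_empty_iff_false, iff_false, not_forall, not_le]
      exact ⟨y - 1, by linarith⟩
    rw [he, measure_empty] at h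
    exact h
  have hSne : S.Nonempty := by
    have hpos : (0 : ENNReal) < ENNReal.ofReal (u ^ α) :=
      ENNReal.ofReal_pos.2 (Real.rpow_pos_of_pos hu0 _)
    obtain ⟨x₀, hx₀⟩ := (hbot.eventually_lt_const hpos).exists
    rw [hcdf] at hx₀
    have h2 : F x₀ ^ α < u ^ α :=
      (ENNReal.ofReal_lt_ofReal_iff (Real.rpow_pos_of_pos hu0 _)).1 hx₀
    refine ⟨x₀, show F x₀ ≤ u from ?_⟩
    by_contra h
    push_neg at h
    exact absurd (Real.rpow_le_rpow hu0.le h.le hα.le) (not_le.2 h2)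
  -- S is bounded above
  have htop : Tendsto (fun x : ℝ => μ (Iic x)) atTop (𝓝 1) := by
    have h := tendsto_measure_Iic_atTop μ
    rwa [measure_univ] at h
  have hSbdd : BddAbove S := by
    have hlt : ENNReal.ofReal (u ^ α) < 1 :=
      ENNReal.ofReal_lt_one.2 (Real.rpow_lt_one hu0.le hu1 hα)
    obtain ⟨x₁, hx₁⟩ := (htop.eventually_const_lt hlt).exists
    rw [hcdf] at hx₁
    have h2 : u ^ α < F x₁ ^ α :=
      (ENNReal.ofReal_lt_ofReal_iff_of_nonneg (Real.rpow_nonneg hu0.le _)).1 hx₁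
    have h3 : u < F x₁ := by
      by_contra h
      push_neg at h
      exact absurd (Real.rpow_le_rpow (hF0 x₁) h hα.le) (not_le.2 h2)
    refine ⟨x₁, fun x hx => ?_⟩
    by_contra hc
    push_neg at hc
    exact absurd (show F x ≤ u from hx) (not_le.2 (lt_of_lt_of_le h3 (hmono hc.le)))
  set a := sSup S with ha_def
  have haS : a ∈ S := hSclosed.csSup_mem hSne hSbdd
  have hFa_le : F a ≤ u := haS
  have hFa : F a = u := by
    refine le_antisymm hFa_le ?_
    by_contra h
    push_neg at h
    have h1 : {x | F x < u} ∈ 𝓝 a :=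
      (isOpen_lt hFc continuous_const).mem_nhds h
    have h2 : ∀ᶠ b in 𝓝[>] a, F b < u := mem_nhdsWithin_of_mem_nhds h1
    obtain ⟨b, hb1, hb2⟩ := (h2.and self_mem_nhdsWithin).exists
    exact absurd (le_csSup hSbdd (show b ∈ S from hb1.le)) (not_le.2 hb2)
  have hS : S = Iic a := by
    apply Subset.antisymm
    · exact fun x hx => le_csSup hSbdd hx
    · intro x hx
      exact le_trans (hmono hx) (le_of_eq hFa)
  have hc : {x : ℝ | u < F x} = Sᶜ := by
    ext x; simp [hSdef, not_le]
  rw [hc, prob_compl_eq_one_sub hSclosed.measurableSet, hS, hcdf, hFa]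

private lemma eew_aux_atom (μ : Measure ℝ) [IsProbabilityMeasure μ] (F : ℝ → ℝ) (α : ℝ)
    (hα : 0 < α) (hF0 : ∀ x, 0 ≤ F x) (hFc : Continuous F)
    (hcdf : ∀ x, μ (Iic x) = ENNReal.ofReal (F x ^ α)) (a : ℝ) : μ {a} = 0 := by
  set G : ℝ → ℝ := fun b => F b ^ α with hGdef
  have hGc : Continuous G := hFc.rpow_const (fun x => Or.inr hα.le)
  have key : ∀ ε > (0:ℝ), μ {a} ≤ ENNReal.ofReal ε := by
    intro ε hε
    have h1 : Tendsto G (𝓝[<] a) (𝓝 (G a)) :=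
      (hGc.tendsto a).mono_left nhdsWithin_le_nhds
    have h2 : ∀ᶠ b in 𝓝[<] a, G a - ε < G b :=
      h1.eventually_const_lt (by linarith)
    obtain ⟨b, hb1, hb2⟩ := (h2.and self_mem_nhdsWithin).exists
    have hba : b < a := hb2
    have hsub : {a} ⊆ Ioc b a := by
      intro x hx; rw [mem_singleton_iff] at hx; subst hx; exact ⟨hba, le_rfl⟩
    have hsum : μ (Iic b) + μ (Ioc b a) = μ (Iic a) := by
      rw [← measure_union (Iic_disjoint_Ioc le_rfl) measurableSet_Ioc,
        Iic_union_Ioc_eq_Iic hba.le]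
    have hIoc : μ (Ioc b a) = μ (Iic a) - μ (Iic b) :=
      ENNReal.eq_sub_of_add_eq (measure_ne_top _ _) (by rw [add_comm]; exact hsum)
    calc μ {a} ≤ μ (Ioc b a) := measure_mono hsub
      _ = μ (Iic a) - μ (Iic b) := hIoc
      _ = ENNReal.ofReal (G a) - ENNReal.ofReal (G b) := by rw [hcdf, hcdf]
      _ = ENNReal.ofReal (G a - G b) := (ENNReal.ofReal_sub _ (Real.rpow_nonneg (hF0 b) _)).symm
      _ ≤ ENNReal.ofReal ε := ENNReal.ofReal_le_ofReal (by linarith)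
  by_contra hne
  have hfin : μ {a} ≠ ⊤ := measure_ne_top _ _
  have hpos : 0 < (μ {a}).toReal := ENNReal.toReal_pos hne hfin
  have h := key ((μ {a}).toReal / 2) (by linarith)
  have hlt : ENNReal.ofReal ((μ {a}).toReal / 2) < μ {a} := by
    conv_rhs => rw [← ENNReal.ofReal_toReal hfin]
    exact ENNReal.ofReal_lt_ofReal_iff_of_nonneg (by linarith) |>.2 (by linarith)
  exact absurd h (not_le.2 hlt)

/-- For independent `U₁ ~ EEW(α₁, λ, H)` and `U₃ ~ EEW(α₃, λ, H)`,
`ℙ(U₃ < U₁) = α₁/(α₁+α₃)`. -/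
theorem eew_comparison_probability
    {Ω : Type*} [MeasurableSpace Ω] (P : Measure Ω) [IsProbabilityMeasure P]
    (lam α₁ α₃ : ℝ) (hlam : 0 < lam) (hα₁ : 0 < α₁) (hα₃ : 0 < α₃)
    (H : ℝ → ℝ) (hH : ∀ x, 0 ≤ H x) (hHcont : Continuous H)
    (U₁ U₃ : Ω → ℝ) (hU₁ : Measurable U₁) (hU₃ : Measurable U₃)
    (hindep : IndepFun U₁ U₃ P)
    (hcdf₁ : ∀ x, P {ω | U₁ ω ≤ x} =
      ENNReal.ofReal ((1 - Real.exp (-lam * H x)) ^ α₁))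
    (hcdf₃ : ∀ x, P {ω | U₃ ω ≤ x} =
      ENNReal.ofReal ((1 - Real.exp (-lam * H x)) ^ α₃)) :
    P {ω | U₃ ω < U₁ ω} = ENNReal.ofReal (α₁ / (α₁ + α₃)) := by
  set F : ℝ → ℝ := fun x => 1 - Real.exp (-lam * H x) with hFdef
  have hF0 : ∀ x, 0 ≤ F x := by
    intro x
    have : Real.exp (-lam * H x) ≤ 1 :=
      Real.exp_le_one_iff.2 (by nlinarith [hH x])
    simp only [hFdef]; linarith
  have hF1 : ∀ x, F x < 1 := fun x => by
    simp only [hFdef]; nlinarith [Real.exp_pos (-lam * H x)]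
  have hFc : Continuous F :=
    continuous_const.sub (Real.continuous_exp.comp (continuous_const.mul hHcont))
  set μ₁ : Measure ℝ := P.map U₁ with hμ₁def
  set μ₃ : Measure ℝ := P.map U₃ with hμ₃def
  haveI : IsProbabilityMeasure μ₁ := Measure.isProbabilityMeasure_map hU₁.aemeasurable
  haveI : IsProbabilityMeasure μ₃ := Measure.isProbabilityMeasure_map hU₃.aemeasurable
  have hcdfμ₁ : ∀ x, μ₁ (Iic x) = ENNReal.ofReal (F x ^ α₁) := by
    intro x
    rw [hμ₁def, Measure.map_apply hU₁ measurableSet_Iic]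
    exact hcdf₁ x
  have hcdfμ₃ : ∀ x, μ₃ (Iic x) = ENNReal.ofReal (F x ^ α₃) := by
    intro x
    rw [hμ₃def, Measure.map_apply hU₃ measurableSet_Iic]
    exact hcdf₃ x
  have hatom : ∀ a : ℝ, μ₃ {a} = 0 :=
    eew_aux_atom μ₃ F α₃ hα₃ hF0 hFc hcdfμ₃
  -- joint law is the product
  have hμprod : P.map (fun ω => (U₁ ω, U₃ ω)) = μ₁.prod μ₃ :=
    (indepFun_iff_map_prod_eq_prod_map_map hU₁.aemeasurable hU₃.aemeasurable).1 hindep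
  have hsetm : MeasurableSet {p : ℝ × ℝ | p.2 < p.1} :=
    (isOpen_lt continuous_snd continuous_fst).measurableSet
  have step1 : P {ω | U₃ ω < U₁ ω} = (μ₁.prod μ₃) {p : ℝ × ℝ | p.2 < p.1} := by
    rw [← hμprod, Measure.map_apply (hU₁.prodMk hU₃) hsetm]
    rfl
  have step2 : (μ₁.prod μ₃) {p : ℝ × ℝ | p.2 < p.1}
      = ∫⁻ x, ENNReal.ofReal (F x ^ α₃) ∂μ₁ := by
    rw [Measure.prod_apply hsetm]
    apply lintegral_congr
    intro x
    have hpre : (Prod.mk x ⁻¹' {p : ℝ × ℝ | p.2 < p.1}) = Iio x := rfl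
    rw [hpre, ← hcdfμ₃ x]
    refine le_antisymm (measure_mono Iio_subset_Iic_self) ?_
    calc μ₃ (Iic x) = μ₃ (Iio x ∪ {x}) := by rw [union_singleton, Iio_insert]
      _ ≤ μ₃ (Iio x) + μ₃ {x} := measure_union_le _ _
      _ = μ₃ (Iio x) := by rw [hatom x, add_zero]
  -- layer cake
  have hGc : Continuous fun x => F x ^ α₃ := hFc.rpow_const (fun x => Or.inr hα₃.le)
  have step3 : ∫⁻ x, ENNReal.ofReal (F x ^ α₃) ∂μ₁
      = ∫⁻ t in Ioi (0:ℝ), μ₁ {x | t < F x ^ α₃} := by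
    exact lintegral_eq_lintegral_meas_lt μ₁
      (ae_of_all _ fun x => Real.rpow_nonneg (hF0 x) _) hGc.measurable.aemeasurable
  set q : ℝ := α₁ / α₃ with hqdef
  have hq : 0 < q := div_pos hα₁ hα₃
  have step4 : ∫⁻ t in Ioi (0:ℝ), μ₁ {x | t < F x ^ α₃}
      = ∫⁻ t in Ioo (0:ℝ) 1, ENNReal.ofReal (1 - t ^ q) := by
    rw [← Ioo_union_Ici_eq_Ioi (zero_lt_one : (0:ℝ) < 1),
      lintegral_union measurableSet_Ici (Set.disjoint_left.mpr fun t ht ht' => ht.2.not_ge ht')]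
    have hzero : ∫⁻ t in Ici (1:ℝ), μ₁ {x | t < F x ^ α₃} = 0 := by
      rw [setLIntegral_congr_fun measurableSet_Ici
        (fun ⦃t⦄ (ht : 1 ≤ t) => ?_), lintegral_zero]
      have : {x : ℝ | t < F x ^ α₃} = ∅ := by
        ext x
        simp only [mem_setOf_eq, mem_empty_iff_false, iff_false, not_lt]
        exact le_trans (Real.rpow_le_one (hF0 x) (hF1 x).le hα₃.le) ht
      rw [this, measure_empty]
    rw [hzero, add_zero]
    apply setLIntegral_congr_fun measurableSet_Ioo
    intro t ht
    obtain ⟨ht0, ht1⟩ := ht; beta_reduce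
    have hset : {x : ℝ | t < F x ^ α₃} = {x : ℝ | t ^ α₃⁻¹ < F x} := by
      ext x
      exact (Real.rpow_inv_lt_iff_of_pos ht0.le (hF0 x) hα₃).symm
    have hu0 : 0 < t ^ α₃⁻¹ := Real.rpow_pos_of_pos ht0 _
    have hu1 : t ^ α₃⁻¹ < 1 := Real.rpow_lt_one ht0.le ht1 (inv_pos.2 hα₃)
    rw [hset, eew_aux_compl μ₁ F α₁ hα₁ hF0 hF1 hFc hcdfμ₁ _ hu0 hu1]
    have hpow : (t ^ α₃⁻¹) ^ α₁ = t ^ q := by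
      rw [← Real.rpow_mul ht0.le, hqdef]
      ring_nf
    rw [hpow, ← ENNReal.ofReal_one, ← ENNReal.ofReal_sub _ (Real.rpow_nonneg ht0.le q)]
  have hint : IntervalIntegrable (fun t : ℝ => 1 - t ^ q) volume 0 1 :=
    (intervalIntegrable_const).sub (intervalIntegral.intervalIntegrable_rpow' (by linarith))
  have step5 : ∫⁻ t in Ioo (0:ℝ) 1, ENNReal.ofReal (1 - t ^ q)
      = ENNReal.ofReal (∫ t in Ioo (0:ℝ) 1, (1 - t ^ q)) := by
    rw [ofReal_integral_eq_lintegral_ofReal]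
    · have := (intervalIntegrable_iff_integrableOn_Ioc_of_le (zero_le_one : (0:ℝ) ≤ 1)).1 hint
      exact this.mono_set Ioo_subset_Ioc_self
    · refine (ae_restrict_iff' measurableSet_Ioo).2 (ae_of_all _ ?_)
      rintro t ⟨ht0, ht1⟩
      have : t ^ q ≤ 1 := Real.rpow_le_one ht0.le ht1.le hq.le
      simpa using this
  have step6 : ∫ t in Ioo (0:ℝ) 1, (1 - t ^ q) = 1 - 1 / (q + 1) := by
    rw [← integral_Ioc_eq_integral_Ioo, ← intervalIntegral.integral_of_le zero_le_one,
      intervalIntegral.integral_sub intervalIntegrable_const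
        (intervalIntegral.intervalIntegrable_rpow' (by linarith)),
      integral_rpow (Or.inl (by linarith : (-1:ℝ) < q))]
    simp [Real.zero_rpow (by linarith : q + 1 ≠ 0)]
  have harith : 1 - 1 / (q + 1) = α₁ / (α₁ + α₃) := by
    rw [hqdef]
    have h1 : α₁ + α₃ ≠ 0 := by linarith
    have h2 : α₃ ≠ 0 := hα₃.ne'
    field_simp
    ring
  rw [step1, step2, step3, step4, step5, step6, harith]
end

section
/- For all 0 < x₁ ≤ x₂, ℙ(X₁ ≤ x₁ and X₂ ≤ x₂) = (1 − exp(−λ·x₁))^{α₁+α₃}·(1 − exp(−λ·x₂))^{α₂}, and for all 0 < x₂ ≤ x₁, ℙ(X₁ ≤ x₁ and X₂ ≤ x₂) = (1 − exp(−λ·x₁))^{α₁}·(1 − exp(−λ·x₂))^{α₂+α₃} (the bivariate generalized exponential joint cdf). -/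
open MeasureTheory ProbabilityTheory Real

lemma bge_aux {Ω : Type*} [MeasurableSpace Ω] (P : Measure Ω)
    (U : Fin 3 → Ω → ℝ) (hUmeas : ∀ i, Measurable (U i))
    (hindep : iIndepFun U P)
    (t : Fin 3 → ℝ) :
    P (⋂ i, {ω | U i ω ≤ t i}) = ∏ i, P {ω | U i ω ≤ t i} := by
  refine hindep.meas_iInter fun i => ?_
  exact ⟨Set.Iic (t i), measurableSet_Iic, rfl⟩

/-- The bivariate generalized exponential joint cdf. -/
theorem bge_joint_cdf
    {Ω : Type*} [MeasurableSpace Ω] (P : Measure Ω) [IsProbabilityMeasure P]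
    (lam : ℝ) (hlam : 0 < lam)
    (α : Fin 3 → ℝ) (hα : ∀ i, 0 < α i)
    (U : Fin 3 → Ω → ℝ) (hUmeas : ∀ i, Measurable (U i))
    (hindep : iIndepFun U P)
    (hcdf_pos : ∀ i (x : ℝ), 0 ≤ x → P {ω | U i ω ≤ x} =
      ENNReal.ofReal ((1 - Real.exp (-lam * x)) ^ (α i)))
    (hcdf_neg : ∀ i (x : ℝ), x < 0 → P {ω | U i ω ≤ x} = 0) :
    (∀ x₁ x₂ : ℝ, 0 < x₁ → x₁ ≤ x₂ →
      P {ω | max (U 0 ω) (U 2 ω) ≤ x₁ ∧ max (U 1 ω) (U 2 ω) ≤ x₂} =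
        ENNReal.ofReal ((1 - Real.exp (-lam * x₁)) ^ (α 0 + α 2) *
          (1 - Real.exp (-lam * x₂)) ^ α 1)) ∧
    (∀ x₁ x₂ : ℝ, 0 < x₂ → x₂ ≤ x₁ →
      P {ω | max (U 0 ω) (U 2 ω) ≤ x₁ ∧ max (U 1 ω) (U 2 ω) ≤ x₂} =
        ENNReal.ofReal ((1 - Real.exp (-lam * x₁)) ^ α 0 *
          (1 - Real.exp (-lam * x₂)) ^ (α 1 + α 2))) := by
  have base_pos : ∀ x : ℝ, 0 < x → 0 < 1 - Real.exp (-lam * x) := by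
    intro x hx
    have : Real.exp (-lam * x) < 1 := by
      rw [Real.exp_lt_one_iff]
      nlinarith
    linarith
  constructor
  · intro x₁ x₂ hx₁ h12
    have hx₂ : 0 < x₂ := lt_of_lt_of_le hx₁ h12
    have hset : {ω | max (U 0 ω) (U 2 ω) ≤ x₁ ∧ max (U 1 ω) (U 2 ω) ≤ x₂} =
        ⋂ i, {ω | U i ω ≤ (![x₁, x₂, x₁] : Fin 3 → ℝ) i} := by
      ext ω
      simp only [Set.mem_setOf_eq, Set.mem_iInter, max_le_iff, Fin.forall_fin_succ,
        Fin.forall_fin_zero_pi]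
      constructor
      · rintro ⟨⟨h0, h2⟩, ⟨h1, _⟩⟩
        exact ⟨h0, h1, h2, fun i => i.elim0⟩
      · rintro ⟨h0, h1, h2, _⟩
        exact ⟨⟨h0, h2⟩, ⟨h1, le_trans h2 h12⟩⟩
    rw [hset, bge_aux P U hUmeas hindep, Fin.prod_univ_three]
    simp only [Matrix.cons_val_zero, Matrix.cons_val_one, Matrix.head_cons,
      Matrix.cons_val_two, Matrix.tail_cons]
    rw [hcdf_pos 0 x₁ hx₁.le, hcdf_pos 1 x₂ hx₂.le, hcdf_pos 2 x₁ hx₁.le]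
    rw [← ENNReal.ofReal_mul (Real.rpow_nonneg (base_pos x₁ hx₁).le _),
      ← ENNReal.ofReal_mul (mul_nonneg (Real.rpow_nonneg (base_pos x₁ hx₁).le _)
        (Real.rpow_nonneg (base_pos x₂ hx₂).le _))]
    congr 1
    rw [Real.rpow_add (base_pos x₁ hx₁)]
    ring
  · intro x₁ x₂ hx₂ h21
    have hx₁ : 0 < x₁ := lt_of_lt_of_le hx₂ h21
    have hset : {ω | max (U 0 ω) (U 2 ω) ≤ x₁ ∧ max (U 1 ω) (U 2 ω) ≤ x₂} =
        ⋂ i, {ω | U i ω ≤ (![x₁, x₂, x₂] : Fin 3 → ℝ) i} := by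
      ext ω
      simp only [Set.mem_setOf_eq, Set.mem_iInter, max_le_iff, Fin.forall_fin_succ,
        Fin.forall_fin_zero_pi]
      constructor
      · rintro ⟨⟨h0, _⟩, ⟨h1, h2⟩⟩
        exact ⟨h0, h1, h2, fun i => i.elim0⟩
      · rintro ⟨h0, h1, h2, _⟩
        exact ⟨⟨h0, le_trans h2 h21⟩, ⟨h1, h2⟩⟩
    rw [hset, bge_aux P U hUmeas hindep, Fin.prod_univ_three]
    simp only [Matrix.cons_val_zero, Matrix.cons_val_one, Matrix.head_cons,
      Matrix.cons_val_two, Matrix.tail_cons]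
    rw [hcdf_pos 0 x₁ hx₁.le, hcdf_pos 1 x₂ hx₂.le, hcdf_pos 2 x₂ hx₂.le]
    rw [← ENNReal.ofReal_mul (Real.rpow_nonneg (base_pos x₁ hx₁).le _),
      ← ENNReal.ofReal_mul (mul_nonneg (Real.rpow_nonneg (base_pos x₁ hx₁).le _)
        (Real.rpow_nonneg (base_pos x₂ hx₂).le _))]
    congr 1
    rw [Real.rpow_add (base_pos x₂ hx₂)]
    ring
end

section
/- For all 0 < x₁ ≤ x₂, ℙ(X₁ ≤ x₁ and X₂ ≤ x₂) = (1 − exp(−λ·x₁^β))^{α₁+α₃}·(1 − exp(−λ·x₂^β))^{α₂}, and for all 0 < x₂ ≤ x₁, ℙ(X₁ ≤ x₁ and X₂ ≤ x₂) = (1 − exp(−λ·x₁^β))^{α₁}·(1 − exp(−λ·x₂^β))^{α₂+α₃} (the bivariate exponentiated Weibull joint cdf). -/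
open MeasureTheory ProbabilityTheory Real

/-- The bivariate exponentiated Weibull joint cdf. -/
theorem bew_joint_cdf
    {Ω : Type*} [MeasurableSpace Ω] (P : Measure Ω) [IsProbabilityMeasure P]
    (lam β : ℝ) (hlam : 0 < lam) (hβ : 0 < β)
    (α : Fin 3 → ℝ) (hα : ∀ i, 0 < α i)
    (U : Fin 3 → Ω → ℝ) (hUmeas : ∀ i, Measurable (U i))
    (hindep : iIndepFun U P)
    (hcdf_pos : ∀ i (x : ℝ), 0 ≤ x → P {ω | U i ω ≤ x} =
      ENNReal.ofReal ((1 - Real.exp (-lam * x ^ β)) ^ (α i)))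
    (hcdf_neg : ∀ i (x : ℝ), x < 0 → P {ω | U i ω ≤ x} = 0) :
    (∀ x₁ x₂ : ℝ, 0 < x₁ → x₁ ≤ x₂ →
      P {ω | max (U 0 ω) (U 2 ω) ≤ x₁ ∧ max (U 1 ω) (U 2 ω) ≤ x₂} =
        ENNReal.ofReal ((1 - Real.exp (-lam * x₁ ^ β)) ^ (α 0 + α 2) *
          (1 - Real.exp (-lam * x₂ ^ β)) ^ α 1)) ∧
    (∀ x₁ x₂ : ℝ, 0 < x₂ → x₂ ≤ x₁ →
      P {ω | max (U 0 ω) (U 2 ω) ≤ x₁ ∧ max (U 1 ω) (U 2 ω) ≤ x₂} =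
        ENNReal.ofReal ((1 - Real.exp (-lam * x₁ ^ β)) ^ α 0 *
          (1 - Real.exp (-lam * x₂ ^ β)) ^ (α 1 + α 2))) := by
  have key : ∀ x₁ x₂ : ℝ, 0 ≤ x₁ → 0 ≤ x₂ →
      P {ω | max (U 0 ω) (U 2 ω) ≤ x₁ ∧ max (U 1 ω) (U 2 ω) ≤ x₂} =
        ENNReal.ofReal ((1 - Real.exp (-lam * x₁ ^ β)) ^ α 0) *
        ENNReal.ofReal ((1 - Real.exp (-lam * x₂ ^ β)) ^ α 1) *
        ENNReal.ofReal ((1 - Real.exp (-lam * (min x₁ x₂) ^ β)) ^ α 2) := by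
    intro x₁ x₂ hx₁ hx₂
    set t : Fin 3 → ℝ := ![x₁, x₂, min x₁ x₂] with ht
    have hset : {ω | max (U 0 ω) (U 2 ω) ≤ x₁ ∧ max (U 1 ω) (U 2 ω) ≤ x₂} =
        ⋂ i, U i ⁻¹' Set.Iic (t i) := by
      ext ω
      simp only [Set.mem_setOf_eq, Set.mem_iInter, Set.mem_preimage, Set.mem_Iic, max_le_iff, Fin.forall_fin_succ, ht]
      simp [Fin.forall_fin_two, le_min_iff]
      tauto
    rw [hset, hindep.meas_iInter (fun i => ⟨Set.Iic (t i), measurableSet_Iic, rfl⟩)]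
    rw [Fin.prod_univ_three]
    show P {ω | U 0 ω ≤ x₁} * P {ω | U 1 ω ≤ x₂} * P {ω | U 2 ω ≤ min x₁ x₂} = _
    rw [hcdf_pos 0 _ hx₁, hcdf_pos 1 _ hx₂, hcdf_pos 2 _ (le_min hx₁ hx₂)]
  have hbase : ∀ x : ℝ, 0 < x → 0 < 1 - Real.exp (-lam * x ^ β) := by
    intro x hx
    have hpow : 0 < x ^ β := Real.rpow_pos_of_pos hx β
    have : -lam * x ^ β < 0 := by nlinarith
    have := Real.exp_lt_one_iff.mpr this
    linarith
  constructor
  · intro x₁ x₂ hx₁ hle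
    have h := key x₁ x₂ hx₁.le (hx₁.le.trans hle)
    rw [min_eq_left hle] at h
    rw [h]
    have hA : (0:ℝ) ≤ (1 - Real.exp (-lam * x₁ ^ β)) ^ α 0 :=
      Real.rpow_nonneg (hbase x₁ hx₁).le _
    have hB : (0:ℝ) ≤ (1 - Real.exp (-lam * x₂ ^ β)) ^ α 1 :=
      Real.rpow_nonneg (hbase x₂ (hx₁.trans_le hle)).le _
    rw [← ENNReal.ofReal_mul hA, ← ENNReal.ofReal_mul (mul_nonneg hA hB)]
    congr 1
    rw [Real.rpow_add (hbase x₁ hx₁)]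
    ring
  · intro x₁ x₂ hx₂ hle
    have h := key x₁ x₂ (hx₂.le.trans hle) hx₂.le
    rw [min_eq_right hle] at h
    rw [h]
    have hA : (0:ℝ) ≤ (1 - Real.exp (-lam * x₁ ^ β)) ^ α 0 :=
      Real.rpow_nonneg (hbase x₁ (hx₂.trans_le hle)).le _
    have hB : (0:ℝ) ≤ (1 - Real.exp (-lam * x₂ ^ β)) ^ α 1 :=
      Real.rpow_nonneg (hbase x₂ hx₂).le _
    rw [← ENNReal.ofReal_mul hA, ← ENNReal.ofReal_mul (mul_nonneg hA hB)]
    congr 1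
    rw [Real.rpow_add (hbase x₂ hx₂)]
    ring
end

section
/- For all 0 < x₁ ≤ x₂, ℙ(X₁ ≤ x₁ and X₂ ≤ x₂) = (1 − exp(−(λ/β)·(exp(β·x₁) − 1)))^{α₁+α₃}·(1 − exp(−(λ/β)·(exp(β·x₂) − 1)))^{α₂}, and for all 0 < x₂ ≤ x₁, ℙ(X₁ ≤ x₁ and X₂ ≤ x₂) = (1 − exp(−(λ/β)·(exp(β·x₁) − 1)))^{α₁}·(1 − exp(−(λ/β)·(exp(β·x₂) − 1)))^{α₂+α₃} (the bivariate generalized Gompertz joint cdf). -/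
open MeasureTheory ProbabilityTheory Real

/-- The bivariate generalized Gompertz joint cdf. -/
theorem bgg_joint_cdf
    {Ω : Type*} [MeasurableSpace Ω] (P : Measure Ω) [IsProbabilityMeasure P]
    (lam β : ℝ) (hlam : 0 < lam) (hβ : 0 < β)
    (α : Fin 3 → ℝ) (hα : ∀ i, 0 < α i)
    (U : Fin 3 → Ω → ℝ) (hUmeas : ∀ i, Measurable (U i))
    (hindep : iIndepFun U P)
    (hcdf_pos : ∀ i (x : ℝ), 0 ≤ x → P {ω | U i ω ≤ x} =
      ENNReal.ofReal ((1 - Real.exp (-(lam / β) * (Real.exp (β * x) - 1))) ^ (α i)))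
    (hcdf_neg : ∀ i (x : ℝ), x < 0 → P {ω | U i ω ≤ x} = 0) :
    (∀ x₁ x₂ : ℝ, 0 < x₁ → x₁ ≤ x₂ →
      P {ω | max (U 0 ω) (U 2 ω) ≤ x₁ ∧ max (U 1 ω) (U 2 ω) ≤ x₂} =
        ENNReal.ofReal
          ((1 - Real.exp (-(lam / β) * (Real.exp (β * x₁) - 1))) ^ (α 0 + α 2) *
            (1 - Real.exp (-(lam / β) * (Real.exp (β * x₂) - 1))) ^ α 1)) ∧
    (∀ x₁ x₂ : ℝ, 0 < x₂ → x₂ ≤ x₁ →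
      P {ω | max (U 0 ω) (U 2 ω) ≤ x₁ ∧ max (U 1 ω) (U 2 ω) ≤ x₂} =
        ENNReal.ofReal
          ((1 - Real.exp (-(lam / β) * (Real.exp (β * x₁) - 1))) ^ α 0 *
            (1 - Real.exp (-(lam / β) * (Real.exp (β * x₂) - 1))) ^ (α 1 + α 2))) := by
  set F : ℝ → ℝ := fun x => 1 - Real.exp (-(lam / β) * (Real.exp (β * x) - 1)) with hF
  have hFpos : ∀ x : ℝ, 0 < x → 0 < F x := by
    intro x hx
    have h1 : (1 : ℝ) < Real.exp (β * x) := by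
      have : Real.exp 0 < Real.exp (β * x) := Real.exp_lt_exp.mpr (by positivity)
      simpa using this
    have h2 : -(lam / β) * (Real.exp (β * x) - 1) < 0 := by
      have : 0 < lam / β := div_pos hlam hβ
      nlinarith
    have := Real.exp_lt_one_iff.mpr h2
    simp only [hF]; linarith
  have hFnn : ∀ x : ℝ, 0 ≤ x → 0 ≤ F x := by
    intro x hx
    have h1 : (1 : ℝ) ≤ Real.exp (β * x) := by
      have : Real.exp 0 ≤ Real.exp (β * x) := Real.exp_le_exp.mpr (by positivity)
      simpa using this
    have h2 : -(lam / β) * (Real.exp (β * x) - 1) ≤ 0 := by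
      have : 0 < lam / β := div_pos hlam hβ
      nlinarith
    have := Real.exp_le_one_iff.mpr h2
    simp only [hF]; linarith
  have key : ∀ x₁ x₂ : ℝ, 0 ≤ x₁ → 0 ≤ x₂ →
      P {ω | max (U 0 ω) (U 2 ω) ≤ x₁ ∧ max (U 1 ω) (U 2 ω) ≤ x₂} =
        ENNReal.ofReal (F x₁ ^ α 0) * ENNReal.ofReal (F x₂ ^ α 1) *
          ENNReal.ofReal (F (min x₁ x₂) ^ α 2) := by
    intro x₁ x₂ h1 h2
    set t : Fin 3 → ℝ := ![x₁, x₂, min x₁ x₂] with ht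
    have hset : {ω | max (U 0 ω) (U 2 ω) ≤ x₁ ∧ max (U 1 ω) (U 2 ω) ≤ x₂} =
        ⋂ i, U i ⁻¹' Set.Iic (t i) := by
      ext ω
      simp only [Set.mem_setOf_eq, max_le_iff, Set.mem_iInter, Set.mem_preimage, Set.mem_Iic]
      constructor
      · rintro ⟨⟨a, b⟩, c, d⟩ i
        fin_cases i <;> simp [ht, le_min_iff] <;> tauto
      · intro h
        have h0 := h 0; have h1' := h 1; have h2' := h 2
        simp [ht, le_min_iff] at h0 h1' h2'
        exact ⟨⟨h0, h2'.1⟩, h1', h2'.2⟩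
    rw [hset, hindep.meas_iInter (fun i => ⟨Set.Iic (t i), measurableSet_Iic, rfl⟩)]
    have hP : ∀ i, P (U i ⁻¹' Set.Iic (t i)) = ENNReal.ofReal (F (t i) ^ α i) := by
      intro i
      have hti : 0 ≤ t i := by fin_cases i <;> simp [ht, le_min_iff, h1, h2]
      rw [show U i ⁻¹' Set.Iic (t i) = {ω | U i ω ≤ t i} from rfl, hcdf_pos i (t i) hti]
    rw [Fin.prod_univ_three, hP 0, hP 1, hP 2]
    simp [ht]
  constructor
  · intro x₁ x₂ hx₁ hle
    rw [key x₁ x₂ hx₁.le (hx₁.le.trans hle), min_eq_left hle,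
      ← ENNReal.ofReal_mul (Real.rpow_nonneg (hFnn x₁ hx₁.le) _),
      ← ENNReal.ofReal_mul (mul_nonneg (Real.rpow_nonneg (hFnn x₁ hx₁.le) _)
        (Real.rpow_nonneg (hFnn x₂ (hx₁.le.trans hle)) _))]
    congr 1
    rw [Real.rpow_add (hFpos x₁ hx₁)]
    ring
  · intro x₁ x₂ hx₂ hle
    rw [key x₁ x₂ (hx₂.le.trans hle) hx₂.le, min_eq_right hle,
      ← ENNReal.ofReal_mul (Real.rpow_nonneg (hFnn x₁ (hx₂.le.trans hle)) _),
      ← ENNReal.ofReal_mul (mul_nonneg (Real.rpow_nonneg (hFnn x₁ (hx₂.le.trans hle)) _)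
        (Real.rpow_nonneg (hFnn x₂ hx₂.le) _))]
    congr 1
    rw [Real.rpow_add (hFpos x₂ hx₂)]
    ring
end

section
/- For all 0 < x₁ ≤ x₂, ℙ(X₁ ≤ x₁ and X₂ ≤ x₂) = (1 − exp(−β·x₁ − (γ/2)·x₁²))^{α₁+α₃}·(1 − exp(−β·x₂ − (γ/2)·x₂²))^{α₂}, and for all 0 < x₂ ≤ x₁, ℙ(X₁ ≤ x₁ and X₂ ≤ x₂) = (1 − exp(−β·x₁ − (γ/2)·x₁²))^{α₁}·(1 − exp(−β·x₂ − (γ/2)·x₂²))^{α₂+α₃} (the bivariate generalized linear failure rate joint cdf). -/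
open MeasureTheory ProbabilityTheory Real

lemma bglfr_F_pos {β γ x : ℝ} (hβ : 0 < β) (hγ : 0 < γ) (hx : 0 < x) :
    0 < 1 - Real.exp (-β * x - (γ / 2) * x ^ (2 : ℕ)) := by
  have : -β * x - (γ / 2) * x ^ (2 : ℕ) < 0 := by nlinarith [sq_nonneg x]
  have := Real.exp_lt_one_iff.mpr this
  linarith

/-- The bivariate generalized linear failure rate joint cdf. -/
theorem bglfr_joint_cdf
    {Ω : Type*} [MeasurableSpace Ω] (P : Measure Ω) [IsProbabilityMeasure P]
    (β γ : ℝ) (hβ : 0 < β) (hγ : 0 < γ)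
    (α : Fin 3 → ℝ) (hα : ∀ i, 0 < α i)
    (U : Fin 3 → Ω → ℝ) (hUmeas : ∀ i, Measurable (U i))
    (hindep : iIndepFun U P)
    (hcdf_pos : ∀ i (x : ℝ), 0 ≤ x → P {ω | U i ω ≤ x} =
      ENNReal.ofReal ((1 - Real.exp (-β * x - (γ / 2) * x ^ (2 : ℕ))) ^ (α i)))
    (hcdf_neg : ∀ i (x : ℝ), x < 0 → P {ω | U i ω ≤ x} = 0) :
    (∀ x₁ x₂ : ℝ, 0 < x₁ → x₁ ≤ x₂ →
      P {ω | max (U 0 ω) (U 2 ω) ≤ x₁ ∧ max (U 1 ω) (U 2 ω) ≤ x₂} =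
        ENNReal.ofReal
          ((1 - Real.exp (-β * x₁ - (γ / 2) * x₁ ^ (2 : ℕ))) ^ (α 0 + α 2) *
            (1 - Real.exp (-β * x₂ - (γ / 2) * x₂ ^ (2 : ℕ))) ^ α 1)) ∧
    (∀ x₁ x₂ : ℝ, 0 < x₂ → x₂ ≤ x₁ →
      P {ω | max (U 0 ω) (U 2 ω) ≤ x₁ ∧ max (U 1 ω) (U 2 ω) ≤ x₂} =
        ENNReal.ofReal
          ((1 - Real.exp (-β * x₁ - (γ / 2) * x₁ ^ (2 : ℕ))) ^ α 0 *
            (1 - Real.exp (-β * x₂ - (γ / 2) * x₂ ^ (2 : ℕ))) ^ (α 1 + α 2))) := by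
  set F : ℝ → ℝ := fun x => 1 - Real.exp (-β * x - (γ / 2) * x ^ (2 : ℕ)) with hF
  have key : ∀ x₁ x₂ : ℝ, 0 < x₁ → 0 < x₂ →
      P {ω | max (U 0 ω) (U 2 ω) ≤ x₁ ∧ max (U 1 ω) (U 2 ω) ≤ x₂} =
        ENNReal.ofReal (F x₁ ^ α 0 * F x₂ ^ α 1 * F (min x₁ x₂) ^ α 2) := by
    intro x₁ x₂ hx₁ hx₂
    set t : Fin 3 → ℝ := ![x₁, x₂, min x₁ x₂] with ht
    have hset : {ω | max (U 0 ω) (U 2 ω) ≤ x₁ ∧ max (U 1 ω) (U 2 ω) ≤ x₂} =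
        ⋂ i, {ω | U i ω ≤ t i} := by
      ext ω
      simp only [Set.mem_setOf_eq, Set.mem_iInter, max_le_iff, Fin.forall_fin_succ,
        Fin.forall_fin_zero_pi, ht]
      simp [le_min_iff]
      tauto
    rw [hset, hindep.meas_iInter (s := fun i => {ω | U i ω ≤ t i})
      (fun i => ⟨Set.Iic (t i), measurableSet_Iic, rfl⟩)]
    rw [Fin.prod_univ_three]
    rw [hcdf_pos 0 (t 0) (by simp [ht]; positivity),
        hcdf_pos 1 (t 1) (by simp [ht]; positivity),
        hcdf_pos 2 (t 2) (by simp [ht, le_min_iff]; constructor <;> positivity)]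
    have h0 := (bglfr_F_pos hβ hγ hx₁ : (0:ℝ) < F x₁)
    have h1 := (bglfr_F_pos hβ hγ hx₂ : (0:ℝ) < F x₂)
    have h2 := (bglfr_F_pos hβ hγ (lt_min hx₁ hx₂) : (0:ℝ) < F (min x₁ x₂))
    rw [← ENNReal.ofReal_mul (by positivity), ← ENNReal.ofReal_mul (by positivity)]
    simp [ht, hF]
  constructor
  · intro x₁ x₂ hx₁ hle
    have hx₂ : 0 < x₂ := lt_of_lt_of_le hx₁ hle
    rw [key x₁ x₂ hx₁ hx₂, min_eq_left hle]
    have h0 := bglfr_F_pos hβ hγ hx₁ (γ := γ)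
    congr 1
    rw [Real.rpow_add h0]
    ring
  · intro x₁ x₂ hx₂ hle
    have hx₁ : 0 < x₁ := lt_of_lt_of_le hx₂ hle
    rw [key x₁ x₂ hx₁ hx₂, min_eq_right hle]
    have h1 := bglfr_F_pos hβ hγ hx₂ (γ := γ)
    congr 1
    rw [Real.rpow_add h1]
    ring
end
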